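/- arXiv:1608.05814 — 6 statements merged into one kernel-verified Lean document; each statement's English description precedes it below -/
import Mathlib

section
/- Let ν ∈ ℝ and p ≥ 1. There exists a constant C(ν,p) > 0, depending only on ν and p, such that for every differentiable function f : [0,∞) → ℝ whose derivative Df satisfies f ∈ L^p_ν and Df ∈ L^p_ν, one has sup_{x ∈ [0,∞)} e^{νx} |f(x)|^p ≤ C(ν,p)^p (‖f‖_{ν,p} + ‖Df‖_{ν,p})^p. -/
open MeasureTheory Set Real

/-- Pointwise Young-type inequality: `t ≤ λ^{1-p} t^p + λ`. -/
private lemma young_pt {t lam p : ℝ} (ht : 0 ≤ t) (hlam : 0 < lam) (hp : 1 ≤ p) :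
    t ≤ lam ^ (1 - p) * t ^ p + lam := by
  rcases le_or_gt t lam with h | h
  · have h1 : 0 ≤ lam ^ (1 - p) * t ^ p :=
      mul_nonneg (Real.rpow_nonneg hlam.le _) (Real.rpow_nonneg ht _)
    linarith
  · have ht' : 0 < t := hlam.trans h
    have h2 : t ^ (1 - p) ≤ lam ^ (1 - p) :=
      Real.rpow_le_rpow_of_nonpos hlam h.le (by linarith)
    have h3 : t ^ p * t ^ (1 - p) = t := by
      rw [← Real.rpow_add ht']; norm_num
    calc t = t ^ p * t ^ (1 - p) := h3.symm
      _ ≤ t ^ p * lam ^ (1 - p) :=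
          mul_le_mul_of_nonneg_left h2 (Real.rpow_nonneg ht'.le _)
      _ = lam ^ (1 - p) * t ^ p := mul_comm _ _
      _ ≤ lam ^ (1 - p) * t ^ p + lam := le_add_of_nonneg_right hlam.le

/-- Hölder-type inequality on a unit interval. -/
private lemma holder_Ioc {p a : ℝ} (hp : 1 ≤ p) {h : ℝ → ℝ} (hh : ∀ y, 0 ≤ h y)
    (h1 : IntegrableOn h (Ioc a (a + 1)))
    (h2 : IntegrableOn (fun y => h y ^ p) (Ioc a (a + 1))) :
    ∫ y in Ioc a (a + 1), h y ≤ 2 * (∫ y in Ioc a (a + 1), h y ^ p) ^ (1 / p) := by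
  have hp0 : 0 < p := lt_of_lt_of_le one_pos hp
  have hvol : (volume (Ioc a (a + 1))).toReal = 1 := by simp
  set M : ℝ := ∫ y in Ioc a (a + 1), h y ^ p with hMdef
  have hM0 : 0 ≤ M :=
    setIntegral_nonneg measurableSet_Ioc fun y _ => Real.rpow_nonneg (hh y) p
  rcases eq_or_lt_of_le hM0 with hM0' | hMpos
  · have hae : (fun y => h y ^ p) =ᵐ[volume.restrict (Ioc a (a + 1))] 0 :=
      (integral_eq_zero_iff_of_nonneg_ae
        (Filter.Eventually.of_forall fun y => Real.rpow_nonneg (hh y) p) h2).mp hM0'.symm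
    have hae' : h =ᵐ[volume.restrict (Ioc a (a + 1))] 0 := by
      filter_upwards [hae] with y hy
      by_contra hne
      have hpos : 0 < h y := lt_of_le_of_ne (hh y) (Ne.symm hne)
      exact absurd hy (ne_of_gt (Real.rpow_pos_of_pos hpos p))
    rw [integral_congr_ae hae']
    simp only [Pi.zero_apply, integral_zero]
    rw [← hM0', Real.zero_rpow (by positivity : (1 : ℝ) / p ≠ 0)]
    norm_num
  · set lam : ℝ := M ^ (1 / p) with hlamdef
    have hlampos : 0 < lam := Real.rpow_pos_of_pos hMpos _
    have hconst : IntegrableOn (fun _ : ℝ => lam) (Ioc a (a + 1)) :=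
      (integrableOn_const_iff).mpr (Or.inr measure_Ioc_lt_top)
    have hmono : ∫ y in Ioc a (a + 1), h y ≤
        ∫ y in Ioc a (a + 1), (lam ^ (1 - p) * h y ^ p + lam) :=
      setIntegral_mono_on h1 ((h2.const_mul _).add hconst) measurableSet_Ioc
        (fun y _ => young_pt (hh y) hlampos hp)
    have hval : ∫ y in Ioc a (a + 1), (lam ^ (1 - p) * h y ^ p + lam)
        = lam ^ (1 - p) * M + lam := by
      rw [integral_add (h2.const_mul _) hconst, integral_const_mul, setIntegral_const,
        measureReal_def, hvol, one_smul]
    have hexp : (1 : ℝ) / p * (1 - p) + 1 = 1 / p := by field_simp; ring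
    have hlameq : lam ^ (1 - p) * M = lam := by
      rw [hlamdef, ← Real.rpow_mul hM0]
      calc M ^ (1 / p * (1 - p)) * M = M ^ (1 / p * (1 - p)) * M ^ (1 : ℝ) := by
            rw [Real.rpow_one]
        _ = M ^ (1 / p * (1 - p) + 1) := (Real.rpow_add hMpos _ _).symm
        _ = M ^ (1 / p) := by rw [hexp]
    calc ∫ y in Ioc a (a + 1), h y ≤ lam ^ (1 - p) * M + lam := hmono.trans (le_of_eq hval)
      _ = 2 * lam := by rw [hlameq]; ring

/-- For `ν ∈ ℝ` and `p ≥ 1` there is a constant `C(ν,p) > 0` such that for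
every differentiable `f : [0,∞) → ℝ` with `f ∈ L^p_ν` and derivative `Df ∈ L^p_ν`,
`sup_{x ≥ 0} e^{νx} |f(x)|^p ≤ C(ν,p)^p ‖f‖_{W^{1,p}_ν}^p`
(with `‖f‖_{W^{1,p}_ν} = ‖f‖_{ν,p} + ‖Df‖_{ν,p}`). -/
theorem stmt_3 (ν p : ℝ) (hp : 1 ≤ p) :
    ∃ C : ℝ, 0 < C ∧
      ∀ f Df : ℝ → ℝ, (∀ x, HasDerivAt f (Df x) x) →
        IntegrableOn (fun x => |f x| ^ p * Real.exp (ν * x)) (Ioi 0) →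
        IntegrableOn (fun x => |Df x| ^ p * Real.exp (ν * x)) (Ioi 0) →
        ∀ x : ℝ, 0 ≤ x →
          Real.exp (ν * x) * |f x| ^ p ≤
            C ^ p *
              ((∫ y in Ioi (0 : ℝ), |f y| ^ p * Real.exp (ν * y)) ^ (1 / p) +
                  (∫ y in Ioi (0 : ℝ), |Df y| ^ p * Real.exp (ν * y)) ^ (1 / p)) ^ p := by
  have hp0 : 0 < p := lt_of_lt_of_le one_pos hp
  refine ⟨2 * Real.exp (|ν| / p), by positivity, ?_⟩
  intro f Df hf hIf hIDf x hx
  -- basic facts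
  have hcont : Continuous f :=
    continuous_iff_continuousAt.mpr fun x => (hf x).continuousAt
  have hDfm : Measurable Df := by
    have : Df = deriv f := funext fun x => ((hf x).deriv).symm
    rw [this]; exact measurable_deriv f
  have hsub : Ioc x (x + 1) ⊆ Ioi 0 := fun y hy => lt_of_le_of_lt hx hy.1
  set A : ℝ := ∫ y in Ioi (0 : ℝ), |f y| ^ p * Real.exp (ν * y) with hAdef
  set B : ℝ := ∫ y in Ioi (0 : ℝ), |Df y| ^ p * Real.exp (ν * y) with hBdef
  have hA0 : 0 ≤ A := setIntegral_nonneg measurableSet_Ioi fun y _ => by positivity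
  have hB0 : 0 ≤ B := setIntegral_nonneg measurableSet_Ioi fun y _ => by positivity
  set E : ℝ := Real.exp (|ν| - ν * x) with hEdef
  have hE : 0 < E := Real.exp_pos _
  have hIf' : IntegrableOn (fun y => |f y| ^ p * Real.exp (ν * y)) (Ioc x (x + 1)) :=
    hIf.mono_set hsub
  have hIDf' : IntegrableOn (fun y => |Df y| ^ p * Real.exp (ν * y)) (Ioc x (x + 1)) :=
    hIDf.mono_set hsub
  -- pointwise weight bound
  have hwt : ∀ g : ℝ → ℝ, ∀ y ∈ Ioc x (x + 1), ∀ _ : (0:ℝ) ≤ g y,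
      g y ≤ E * (g y * Real.exp (ν * y)) := by
    intro g y hy hg
    obtain ⟨hy1, hy2⟩ := hy
    have h1 : E * (g y * Real.exp (ν * y)) = g y * Real.exp ((|ν| - ν * x) + ν * y) := by
      rw [Real.exp_add]; ring
    rw [h1]
    have h2 : (0 : ℝ) ≤ (|ν| - ν * x) + ν * y := by
      have : ν * x - ν * y ≤ |ν| := by
        calc ν * x - ν * y = ν * (x - y) := by ring
          _ ≤ |ν * (x - y)| := le_abs_self _
          _ = |ν| * |x - y| := abs_mul _ _
          _ ≤ |ν| * 1 := by
              apply mul_le_mul_of_nonneg_left _ (abs_nonneg ν)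
              rw [abs_le]
              exact ⟨by linarith, by linarith⟩
          _ = |ν| := mul_one _
      linarith
    nlinarith [Real.one_le_exp h2, Real.exp_pos ((|ν| - ν * x) + ν * y)]
  -- integrability facts on Ioc x (x+1)
  have hfp_cont : Continuous fun y => |f y| ^ p :=
    hcont.abs.rpow_const fun y => Or.inr hp0.le
  have hfp_int : IntegrableOn (fun y => |f y| ^ p) (Ioc x (x + 1)) :=
    hfp_cont.integrableOn_Ioc
  have hf_int : IntegrableOn (fun y => |f y|) (Ioc x (x + 1)) :=
    hcont.abs.integrableOn_Ioc
  have hDfp_int : IntegrableOn (fun y => |Df y| ^ p) (Ioc x (x + 1)) := by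
    refine Integrable.mono' (hIDf'.const_mul E) ?_ ?_
    · exact (Measurable.aestronglyMeasurable (by fun_prop))
    · refine (ae_restrict_iff' measurableSet_Ioc).mpr
        (Filter.Eventually.of_forall fun y hy => ?_)
      have h0 : (0:ℝ) ≤ |Df y| ^ p := Real.rpow_nonneg (abs_nonneg _) p
      rw [Real.norm_eq_abs, abs_of_nonneg h0]
      exact hwt (fun y => |Df y| ^ p) y hy h0
  have hone : IntegrableOn (fun _ : ℝ => (1 : ℝ)) (Ioc x (x + 1)) :=
    (integrableOn_const_iff).mpr (Or.inr measure_Ioc_lt_top)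
  have hDf_int : IntegrableOn Df (Ioc x (x + 1)) := by
    refine Integrable.mono' (hone.add hDfp_int)
      hDfm.aestronglyMeasurable (Filter.Eventually.of_forall fun y => ?_)
    rw [Real.norm_eq_abs]
    rcases le_or_gt (|Df y|) 1 with h | h
    · have : (0:ℝ) ≤ |Df y| ^ p := Real.rpow_nonneg (abs_nonneg _) p
      calc |Df y| ≤ 1 := h
        _ ≤ 1 + |Df y| ^ p := by linarith
    · calc |Df y| = |Df y| ^ (1:ℝ) := (Real.rpow_one _).symm
        _ ≤ |Df y| ^ p := Real.rpow_le_rpow_of_exponent_le h.le hp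
        _ ≤ 1 + |Df y| ^ p := by linarith
  have hDfabs_int : IntegrableOn (fun y => |Df y|) (Ioc x (x + 1)) := hDf_int.abs
  -- FTC + averaging
  set K : ℝ := ∫ y in Ioc x (x + 1), |Df y| with hKdef
  have hptw : ∀ y ∈ Ioc x (x + 1), |f x| ≤ |f y| + K := by
    intro y hy
    have hxy : x ≤ y := hy.1.le
    have hii : IntervalIntegrable Df volume x y :=
      (intervalIntegrable_iff_integrableOn_Ioc_of_le hxy).mpr
        (hDf_int.mono_set (Ioc_subset_Ioc_right hy.2))
    have hftc : ∫ t in x..y, Df t = f y - f x :=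
      intervalIntegral.integral_eq_sub_of_hasDerivAt (fun t _ => hf t) hii
    have h1 : |f x| ≤ |f y| + |∫ t in x..y, Df t| := by
      rw [hftc]
      have := abs_sub_abs_le_abs_sub (f x) (f y)
      rw [abs_sub_comm (f x) (f y)] at this
      linarith [abs_nonneg (f y)]
    have h2 : |∫ t in x..y, Df t| ≤ ∫ t in x..y, |Df t| :=
      intervalIntegral.abs_integral_le_integral_abs hxy
    have h3 : ∫ t in x..y, |Df t| ≤ K := by
      rw [intervalIntegral.integral_of_le hxy]
      exact setIntegral_mono_set hDfabs_int
        (Filter.Eventually.of_forall fun t => abs_nonneg _)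
        (HasSubset.Subset.eventuallyLE (Ioc_subset_Ioc_right hy.2))
    linarith
  have hK0 : 0 ≤ K :=
    setIntegral_nonneg measurableSet_Ioc fun y _ => abs_nonneg _
  have hvol : (volume (Ioc x (x + 1))).toReal = 1 := by simp
  have havg : |f x| ≤ (∫ y in Ioc x (x + 1), |f y|) + K := by
    have hconstK : IntegrableOn (fun _ : ℝ => K) (Ioc x (x + 1)) :=
      (integrableOn_const_iff).mpr (Or.inr measure_Ioc_lt_top)
    have h1 : |f x| = ∫ _ in Ioc x (x + 1), |f x| := by
      rw [setIntegral_const, measureReal_def, hvol, one_smul]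
    have h2 : ∫ _ in Ioc x (x + 1), |f x| ≤ ∫ y in Ioc x (x + 1), (|f y| + K) :=
      setIntegral_mono_on ((integrableOn_const_iff).mpr (Or.inr measure_Ioc_lt_top))
        (hf_int.add hconstK) measurableSet_Ioc hptw
    have h3 : ∫ y in Ioc x (x + 1), (|f y| + K)
        = (∫ y in Ioc x (x + 1), |f y|) + K := by
      rw [integral_add hf_int hconstK, setIntegral_const, measureReal_def, hvol, one_smul]
    rw [h1]; rw [h3] at h2; exact h2
  -- Hölder on the unit interval
  have hHf : ∫ y in Ioc x (x + 1), |f y| ≤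
      2 * (∫ y in Ioc x (x + 1), |f y| ^ p) ^ (1 / p) :=
    holder_Ioc hp (fun y => abs_nonneg _) hf_int hfp_int
  have hHDf : K ≤ 2 * (∫ y in Ioc x (x + 1), |Df y| ^ p) ^ (1 / p) :=
    holder_Ioc hp (fun y => abs_nonneg _) hDfabs_int hDfp_int
  -- weight transfer
  have hWf : ∫ y in Ioc x (x + 1), |f y| ^ p ≤ E * A := by
    calc ∫ y in Ioc x (x + 1), |f y| ^ p
        ≤ ∫ y in Ioc x (x + 1), E * (|f y| ^ p * Real.exp (ν * y)) :=
          setIntegral_mono_on hfp_int (hIf'.const_mul E) measurableSet_Ioc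
            (fun y hy => hwt (fun y => |f y| ^ p) y hy (Real.rpow_nonneg (abs_nonneg _) p))
      _ = E * ∫ y in Ioc x (x + 1), |f y| ^ p * Real.exp (ν * y) := integral_const_mul _ _
      _ ≤ E * A := by
          apply mul_le_mul_of_nonneg_left _ hE.le
          exact setIntegral_mono_set hIf
            (Filter.Eventually.of_forall fun y => by positivity)
            (HasSubset.Subset.eventuallyLE hsub)
  have hWDf : ∫ y in Ioc x (x + 1), |Df y| ^ p ≤ E * B := by
    calc ∫ y in Ioc x (x + 1), |Df y| ^ p
        ≤ ∫ y in Ioc x (x + 1), E * (|Df y| ^ p * Real.exp (ν * y)) :=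
          setIntegral_mono_on hDfp_int (hIDf'.const_mul E) measurableSet_Ioc
            (fun y hy => hwt (fun y => |Df y| ^ p) y hy (Real.rpow_nonneg (abs_nonneg _) p))
      _ = E * ∫ y in Ioc x (x + 1), |Df y| ^ p * Real.exp (ν * y) := integral_const_mul _ _
      _ ≤ E * B := by
          apply mul_le_mul_of_nonneg_left _ hE.le
          exact setIntegral_mono_set hIDf
            (Filter.Eventually.of_forall fun y => by positivity)
            (HasSubset.Subset.eventuallyLE hsub)
  -- put everything together
  have hfpint0 : 0 ≤ ∫ y in Ioc x (x + 1), |f y| ^ p :=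
    setIntegral_nonneg measurableSet_Ioc fun y _ => Real.rpow_nonneg (abs_nonneg _) p
  have hDfpint0 : 0 ≤ ∫ y in Ioc x (x + 1), |Df y| ^ p :=
    setIntegral_nonneg measurableSet_Ioc fun y _ => Real.rpow_nonneg (abs_nonneg _) p
  have hrf : (∫ y in Ioc x (x + 1), |f y| ^ p) ^ (1 / p) ≤ E ^ (1 / p) * A ^ (1 / p) := by
    rw [← Real.mul_rpow hE.le hA0]
    exact Real.rpow_le_rpow hfpint0 hWf (by positivity)
  have hrDf : (∫ y in Ioc x (x + 1), |Df y| ^ p) ^ (1 / p) ≤ E ^ (1 / p) * B ^ (1 / p) := by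
    rw [← Real.mul_rpow hE.le hB0]
    exact Real.rpow_le_rpow hDfpint0 hWDf (by positivity)
  have hmain : |f x| ≤ 2 * E ^ (1 / p) * (A ^ (1 / p) + B ^ (1 / p)) := by
    have := havg.trans (add_le_add hHf hHDf)
    calc |f x| ≤ 2 * (∫ y in Ioc x (x + 1), |f y| ^ p) ^ (1 / p)
          + 2 * (∫ y in Ioc x (x + 1), |Df y| ^ p) ^ (1 / p) := this
      _ ≤ 2 * (E ^ (1 / p) * A ^ (1 / p)) + 2 * (E ^ (1 / p) * B ^ (1 / p)) := by
          have h2 : (0:ℝ) ≤ 2 := by norm_num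
          exact add_le_add (mul_le_mul_of_nonneg_left hrf h2)
            (mul_le_mul_of_nonneg_left hrDf h2)
      _ = 2 * E ^ (1 / p) * (A ^ (1 / p) + B ^ (1 / p)) := by ring
  -- raise to the power p
  have hS0 : 0 ≤ A ^ (1 / p) + B ^ (1 / p) := by positivity
  have hRHS0 : 0 ≤ 2 * E ^ (1 / p) * (A ^ (1 / p) + B ^ (1 / p)) := by positivity
  have hpow : |f x| ^ p ≤ (2 * E ^ (1 / p)) ^ p * (A ^ (1 / p) + B ^ (1 / p)) ^ p := by
    calc |f x| ^ p ≤ (2 * E ^ (1 / p) * (A ^ (1 / p) + B ^ (1 / p))) ^ p :=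
          Real.rpow_le_rpow (abs_nonneg _) hmain hp0.le
      _ = (2 * E ^ (1 / p)) ^ p * (A ^ (1 / p) + B ^ (1 / p)) ^ p :=
          Real.mul_rpow (by positivity) hS0
  have hEpow : (E ^ (1 / p)) ^ p = E := by
    rw [← Real.rpow_mul hE.le]
    rw [one_div_mul_cancel hp0.ne', Real.rpow_one]
  have hCpow : (2 * Real.exp (|ν| / p)) ^ p = 2 ^ p * Real.exp |ν| := by
    rw [Real.mul_rpow (by norm_num) (Real.exp_pos _).le, ← Real.exp_mul,
      div_mul_cancel₀ _ hp0.ne']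
  have h2Epow : (2 * E ^ (1 / p)) ^ p = 2 ^ p * E := by
    rw [Real.mul_rpow (by norm_num) (Real.rpow_nonneg hE.le _), hEpow]
  have hfinal : Real.exp (ν * x) * |f x| ^ p ≤
      2 ^ p * Real.exp |ν| * (A ^ (1 / p) + B ^ (1 / p)) ^ p := by
    have h1 : Real.exp (ν * x) * |f x| ^ p ≤
        Real.exp (ν * x) * (2 ^ p * E * (A ^ (1 / p) + B ^ (1 / p)) ^ p) := by
      apply mul_le_mul_of_nonneg_left _ (Real.exp_pos _).le
      rw [← h2Epow]; exact hpow
    have h2 : Real.exp (ν * x) * (2 ^ p * E * (A ^ (1 / p) + B ^ (1 / p)) ^ p)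
        = 2 ^ p * Real.exp |ν| * (A ^ (1 / p) + B ^ (1 / p)) ^ p := by
      rw [hEdef]
      rw [show Real.exp (ν * x) * (2 ^ p * Real.exp (|ν| - ν * x)
          * (A ^ (1 / p) + B ^ (1 / p)) ^ p)
          = 2 ^ p * (Real.exp (ν * x) * Real.exp (|ν| - ν * x))
          * (A ^ (1 / p) + B ^ (1 / p)) ^ p by ring]
      rw [← Real.exp_add]
      ring_nf
    rw [h2] at h1; exact h1
  rw [hCpow]
  exact hfinal
end

section
/- Let ν > 0, p ≥ 2 and 1/p + 1/q = 1. Suppose there is a function ḡ ∈ L^p_ν such that ‖g(t,x,u)‖_H ≤ |ḡ(x)| for all t, x ∈ [0,∞) and u ∈ ℝ. Then for every t ≥ 0 and every measurable f ∈ L^p_ν, the function F(t,f) is well defined, belongs to L^p_ν, and satisfies ‖F(t,f)‖_{ν,p} ≤ (p/(νq))^{1/q} ‖ḡ‖²_{ν,p}. -/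
open MeasureTheory Set Real

private lemma memLp_of_int_rpow {α : Type*} [MeasurableSpace α] {μ : Measure α}
    {f : α → ℝ} {r : ℝ} (hr : 0 < r) (hm : AEStronglyMeasurable f μ)
    (h : Integrable (fun x => |f x| ^ r) μ) : MemLp f (ENNReal.ofReal r) μ := by
  have hne : ENNReal.ofReal r ≠ 0 := by simp [ENNReal.ofReal_eq_zero, not_le, hr]
  rw [← memLp_norm_rpow_iff hm hne ENNReal.ofReal_ne_top,
    ENNReal.div_self hne ENNReal.ofReal_ne_top, memLp_one_iff_integrable]
  have : (fun x => ‖f x‖ ^ (ENNReal.ofReal r).toReal) = fun x => |f x| ^ r := by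
    funext x
    rw [ENNReal.toReal_ofReal hr.le, Real.norm_eq_abs]
  rw [this]
  refine h.congr' h.aestronglyMeasurable ?_
  filter_upwards with x
  rw [Real.norm_of_nonneg (Real.rpow_nonneg (abs_nonneg _) _)]

/-- The HJMM drift: `F(t,f)(x) = ⟨ g(t,x,f(x)), ∫_0^x g(t,y,f(y)) dy ⟩_H`. -/
noncomputable def hjmDrift {H : Type*} [NormedAddCommGroup H] [InnerProductSpace ℝ H]
    (g : ℝ → ℝ → ℝ → H) (t : ℝ) (f : ℝ → ℝ) (x : ℝ) : ℝ :=
  @inner ℝ H _ (g t x (f x)) (∫ y in Ioc (0 : ℝ) x, g t y (f y))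

/-- Under the pointwise bound `‖g(t,x,u)‖_H ≤ |ḡ(x)|` with `ḡ ∈ L^p_ν`,
for every `t ≥ 0` and measurable `f ∈ L^p_ν` the function `F(t,f)` is well defined,
belongs to `L^p_ν`, and `‖F(t,f)‖_{ν,p} ≤ (p/(νq))^{1/q} ‖ḡ‖²_{ν,p}`. -/
theorem stmt_5 {H : Type*} [NormedAddCommGroup H] [InnerProductSpace ℝ H]
    [CompleteSpace H] [TopologicalSpace.SeparableSpace H]
    (ν p q : ℝ) (hν : 0 < ν) (hp : 2 ≤ p) (hpq : 1 / p + 1 / q = 1)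
    (g : ℝ → ℝ → ℝ → H)
    (hgm : StronglyMeasurable fun z : ℝ × ℝ × ℝ => g z.1 z.2.1 z.2.2)
    (gbar : ℝ → ℝ) (hgbarm : Measurable gbar)
    (hgbar : IntegrableOn (fun x => |gbar x| ^ p * Real.exp (ν * x)) (Ioi 0))
    (hb : ∀ t x u : ℝ, 0 ≤ t → 0 ≤ x → ‖g t x u‖ ≤ |gbar x|)
    (t : ℝ) (ht : 0 ≤ t) (f : ℝ → ℝ) (hfm : Measurable f)
    (hf : IntegrableOn (fun x => |f x| ^ p * Real.exp (ν * x)) (Ioi 0)) :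
    (∀ x : ℝ, 0 ≤ x → IntegrableOn (fun y => g t y (f y)) (Ioc 0 x)) ∧
      IntegrableOn (fun x => |hjmDrift g t f x| ^ p * Real.exp (ν * x)) (Ioi 0) ∧
      (∫ x in Ioi (0 : ℝ), |hjmDrift g t f x| ^ p * Real.exp (ν * x)) ^ (1 / p) ≤
        (p / (ν * q)) ^ (1 / q) *
          ((∫ x in Ioi (0 : ℝ), |gbar x| ^ p * Real.exp (ν * x)) ^ (1 / p)) ^ 2 := by
  have hp1 : 1 < p := lt_of_lt_of_le one_lt_two hp
  have hp0 : 0 < p := lt_trans one_pos hp1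
  have hcon : Real.HolderConjugate p q := Real.holderConjugate_iff.2 ⟨hp1, by simpa [one_div] using hpq⟩
  have hq0 : 0 < q := hcon.symm.pos
  set I := ∫ x in Ioi (0 : ℝ), |gbar x| ^ p * Real.exp (ν * x) with hIdef
  have hInn : 0 ≤ I := setIntegral_nonneg measurableSet_Ioi fun x _ =>
    mul_nonneg (Real.rpow_nonneg (abs_nonneg _) _) (Real.exp_pos _).le
  -- measurability of y ↦ g t y (f y)
  have hGm : StronglyMeasurable fun y => g t y (f y) :=
    hgm.comp_measurable (measurable_const.prodMk (measurable_id.prodMk hfm))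
  -- integrability of |gbar|^p e^{νy} on Ioc 0 x
  have hgbar_pow : ∀ x : ℝ, IntegrableOn (fun y => |gbar y| ^ p * Real.exp (ν * y)) (Ioc 0 x) :=
    fun x => hgbar.mono_set Ioc_subset_Ioi_self
  -- integrability of |gbar| on Ioc 0 x
  have hgbar_int : ∀ x : ℝ, IntegrableOn (fun y => |gbar y|) (Ioc 0 x) := by
    intro x
    have hconst : IntegrableOn (fun _ : ℝ => (1 : ℝ)) (Ioc 0 x) :=
      integrableOn_const measure_Ioc_lt_top.ne
    refine Integrable.mono' (hconst.add (hgbar_pow x))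
      hgbarm.abs.aestronglyMeasurable.restrict ?_
    filter_upwards [ae_restrict_mem measurableSet_Ioc] with y hy
    rw [Real.norm_eq_abs, abs_abs]
    by_cases hcase : |gbar y| ≤ 1
    · simp only [Pi.add_apply]
      have : 0 ≤ |gbar y| ^ p * Real.exp (ν * y) := by positivity
      linarith
    · push_neg at hcase
      have h1 : |gbar y| ≤ |gbar y| ^ p := by
        calc |gbar y| = |gbar y| ^ (1 : ℝ) := (Real.rpow_one _).symm
          _ ≤ |gbar y| ^ p := Real.rpow_le_rpow_of_exponent_le hcase.le hp1.le
      have h2 : |gbar y| ^ p ≤ |gbar y| ^ p * Real.exp (ν * y) :=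
        le_mul_of_one_le_right (Real.rpow_nonneg (abs_nonneg _) _)
          (Real.one_le_exp (mul_nonneg hν.le hy.1.le))
      simp only [Pi.add_apply]
      linarith [h1.trans h2]
  -- Part 1
  have part1 : ∀ x : ℝ, 0 ≤ x → IntegrableOn (fun y => g t y (f y)) (Ioc 0 x) := by
    intro x hx
    refine Integrable.mono' (hgbar_int x) hGm.aestronglyMeasurable.restrict ?_
    filter_upwards [ae_restrict_mem measurableSet_Ioc] with y hy
    exact hb t y (f y) ht hy.1.le
  -- the exponential integral
  have hc : 0 < ν * q / p := by positivity
  have hexp_int : IntegrableOn (fun y => Real.exp (-(ν * q / p) * y)) (Ioi 0) :=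
    exp_neg_integrableOn_Ioi 0 hc
  have hexp_val : (∫ y in Ioi (0 : ℝ), Real.exp (-(ν * q / p) * y)) = p / (ν * q) := by
    have h1 := integral_exp_neg_mul_rpow one_pos hc
    have h2 : ∫ x in Ioi (0 : ℝ), Real.exp (-(ν * q / p) * x ^ (1 : ℝ))
        = ∫ y in Ioi (0 : ℝ), Real.exp (-(ν * q / p) * y) :=
      setIntegral_congr_fun measurableSet_Ioi fun y _ => by rw [Real.rpow_one]
    rw [h2] at h1
    rw [h1, show (-1 : ℝ) / 1 = -1 by norm_num, Real.rpow_neg_one,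
      show (1 : ℝ) / 1 + 1 = 2 by norm_num, Real.Gamma_two, mul_one, inv_div]
  -- Hölder: key bound on ∫_{Ioc 0 x} |gbar|
  have key : ∀ x : ℝ, 0 ≤ x →
      (∫ y in Ioc (0 : ℝ) x, |gbar y|) ≤ I ^ (1 / p) * (p / (ν * q)) ^ (1 / q) := by
    intro x hx
    have hf1m : AEStronglyMeasurable (fun y => |gbar y| * Real.exp (ν / p * y))
        (volume.restrict (Ioc (0 : ℝ) x)) :=
      (hgbarm.abs.mul (measurable_exp.comp (measurable_const.mul measurable_id))
        ).aestronglyMeasurable.restrict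
    have hf1int : Integrable (fun y => abs (|gbar y| * Real.exp (ν / p * y)) ^ p)
        (volume.restrict (Ioc (0 : ℝ) x)) := by
      have heq : (fun y => abs (|gbar y| * Real.exp (ν / p * y)) ^ p)
          = fun y => |gbar y| ^ p * Real.exp (ν * y) := by
        funext y
        rw [abs_of_nonneg (mul_nonneg (abs_nonneg _) (Real.exp_pos _).le),
          Real.mul_rpow (abs_nonneg _) (Real.exp_pos _).le, ← Real.exp_mul]
        have : ν / p * y * p = ν * y := by field_simp
        rw [this]
      rw [heq]
      exact hgbar_pow x
    have hf1 : MemLp (fun y => |gbar y| * Real.exp (ν / p * y)) (ENNReal.ofReal p)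
        (volume.restrict (Ioc (0 : ℝ) x)) := memLp_of_int_rpow hp0 hf1m hf1int
    have hf2m : AEStronglyMeasurable (fun y => Real.exp (-(ν / p * y)))
        (volume.restrict (Ioc (0 : ℝ) x)) :=
      (Real.continuous_exp.comp (continuous_const.mul continuous_id).neg
        ).aestronglyMeasurable.restrict
    have hpoweq : (fun y => |Real.exp (-(ν / p * y))| ^ q)
        = fun y => Real.exp (-(ν * q / p) * y) := by
      funext y
      rw [abs_of_pos (Real.exp_pos _), ← Real.exp_mul]
      congr 1; ring
    have hf2int : Integrable (fun y => |Real.exp (-(ν / p * y))| ^ q)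
        (volume.restrict (Ioc (0 : ℝ) x)) := by
      rw [hpoweq]
      exact hexp_int.mono_set Ioc_subset_Ioi_self
    have hf2 : MemLp (fun y => Real.exp (-(ν / p * y))) (ENNReal.ofReal q)
        (volume.restrict (Ioc (0 : ℝ) x)) := memLp_of_int_rpow hq0 hf2m hf2int
    have hold := integral_mul_le_Lp_mul_Lq_of_nonneg (μ := volume.restrict (Ioc (0 : ℝ) x))
      hcon (Filter.Eventually.of_forall fun y => by positivity)
      (Filter.Eventually.of_forall fun y => (Real.exp_pos _).le) hf1 hf2
    have e0 : (∫ y in Ioc (0 : ℝ) x, |gbar y|)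
        = ∫ y in Ioc (0 : ℝ) x, (|gbar y| * Real.exp (ν / p * y)) * Real.exp (-(ν / p * y)) := by
      refine setIntegral_congr_fun measurableSet_Ioc fun y _ => ?_
      rw [mul_assoc, ← Real.exp_add, add_neg_cancel, Real.exp_zero, mul_one]
    have e1 : (∫ y in Ioc (0 : ℝ) x, (|gbar y| * Real.exp (ν / p * y)) ^ p)
        = ∫ y in Ioc (0 : ℝ) x, |gbar y| ^ p * Real.exp (ν * y) := by
      refine setIntegral_congr_fun measurableSet_Ioc fun y _ => ?_
      rw [Real.mul_rpow (abs_nonneg _) (Real.exp_pos _).le, ← Real.exp_mul]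
      have : ν / p * y * p = ν * y := by field_simp
      rw [this]
    have e2 : (∫ y in Ioc (0 : ℝ) x, Real.exp (-(ν / p * y)) ^ q)
        = ∫ y in Ioc (0 : ℝ) x, Real.exp (-(ν * q / p) * y) := by
      refine setIntegral_congr_fun measurableSet_Ioc fun y _ => ?_
      rw [← Real.exp_mul]
      congr 1; ring
    rw [e1, e2] at hold
    have hA : (∫ y in Ioc (0 : ℝ) x, |gbar y| ^ p * Real.exp (ν * y)) ≤ I := by
      refine setIntegral_mono_set hgbar ?_ (HasSubset.Subset.eventuallyLE Ioc_subset_Ioi_self)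
      filter_upwards with y
      positivity
    have hB : (∫ y in Ioc (0 : ℝ) x, Real.exp (-(ν * q / p) * y)) ≤ p / (ν * q) := by
      rw [← hexp_val]
      refine setIntegral_mono_set hexp_int ?_ (HasSubset.Subset.eventuallyLE Ioc_subset_Ioi_self)
      filter_upwards with y
      exact (Real.exp_pos _).le
    have hAnn : 0 ≤ ∫ y in Ioc (0 : ℝ) x, |gbar y| ^ p * Real.exp (ν * y) :=
      setIntegral_nonneg measurableSet_Ioc fun y _ => by positivity
    have hBnn : 0 ≤ ∫ y in Ioc (0 : ℝ) x, Real.exp (-(ν * q / p) * y) :=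
      setIntegral_nonneg measurableSet_Ioc fun y _ => (Real.exp_pos _).le
    calc (∫ y in Ioc (0 : ℝ) x, |gbar y|)
        = ∫ y in Ioc (0 : ℝ) x, (|gbar y| * Real.exp (ν / p * y)) * Real.exp (-(ν / p * y)) := e0
      _ ≤ (∫ y in Ioc (0 : ℝ) x, |gbar y| ^ p * Real.exp (ν * y)) ^ (1 / p) *
          (∫ y in Ioc (0 : ℝ) x, Real.exp (-(ν * q / p) * y)) ^ (1 / q) := hold
      _ ≤ I ^ (1 / p) * (p / (ν * q)) ^ (1 / q) := by
          refine mul_le_mul (Real.rpow_le_rpow hAnn hA (by positivity))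
            (Real.rpow_le_rpow hBnn hB (by positivity))
            (Real.rpow_nonneg hBnn _) (Real.rpow_nonneg hInn _)
  set C := I ^ (1 / p) * (p / (ν * q)) ^ (1 / q) with hCdef
  have hC : 0 ≤ C := mul_nonneg (Real.rpow_nonneg hInn _)
    (Real.rpow_nonneg (by positivity) _)
  -- pointwise bound on the drift
  have hFb : ∀ x : ℝ, 0 < x → |hjmDrift g t f x| ≤ |gbar x| * C := by
    intro x hx
    have h1 : |hjmDrift g t f x| ≤ ‖g t x (f x)‖ * ‖∫ y in Ioc (0 : ℝ) x, g t y (f y)‖ :=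
      abs_real_inner_le_norm _ _
    have h2 : ‖∫ y in Ioc (0 : ℝ) x, g t y (f y)‖ ≤ ∫ y in Ioc (0 : ℝ) x, |gbar y| := by
      refine (norm_integral_le_integral_norm _).trans ?_
      refine setIntegral_mono_on (part1 x hx.le).norm (hgbar_int x) measurableSet_Ioc ?_
      intro y hy
      exact hb t y (f y) ht hy.1.le
    refine h1.trans ?_
    exact mul_le_mul (hb t x (f x) ht hx.le) (h2.trans (key x hx.le)) (norm_nonneg _)
      (abs_nonneg _)
  -- measurability of the drift on Ioi 0
  have hφc : ContinuousOn (fun x => ∫ y in Ioc (0 : ℝ) x, g t y (f y)) (Ici 0) := by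
    intro x₀ hx₀
    have hx₀' : (0 : ℝ) ≤ x₀ := hx₀
    have hint : IntegrableOn (fun y => g t y (f y)) (Icc 0 (x₀ + 1)) := by
      rw [integrableOn_Icc_iff_integrableOn_Ioc]
      exact part1 (x₀ + 1) (by linarith)
    have hcont := intervalIntegral.continuousOn_primitive (f := fun y => g t y (f y))
      (a := (0 : ℝ)) (b := x₀ + 1) (μ := volume) hint
    have hmem : Icc (0 : ℝ) (x₀ + 1) ∈ nhdsWithin x₀ (Ici 0) := by
      have := inter_mem_nhdsWithin (Ici (0 : ℝ)) (Iic_mem_nhds (show x₀ < x₀ + 1 by linarith))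
      rwa [Ici_inter_Iic] at this
    exact ContinuousWithinAt.mono_of_mem_nhdsWithin (hcont x₀ ⟨hx₀', by linarith⟩) hmem
  have hφm : AEStronglyMeasurable (fun x => ∫ y in Ioc (0 : ℝ) x, g t y (f y))
      (volume.restrict (Ioi 0)) :=
    (hφc.mono Ioi_subset_Ici_self).aestronglyMeasurable measurableSet_Ioi
  have hFm : AEStronglyMeasurable (hjmDrift g t f) (volume.restrict (Ioi 0)) :=
    AEStronglyMeasurable.inner hGm.aestronglyMeasurable.restrict hφm
  have hFpm : AEStronglyMeasurable (fun x => |hjmDrift g t f x| ^ p * Real.exp (ν * x))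
      (volume.restrict (Ioi 0)) := by
    refine AEStronglyMeasurable.mul ?_
      ((Real.continuous_exp.comp (continuous_const.mul continuous_id)).aestronglyMeasurable.restrict)
    exact ((Real.continuous_rpow_const hp0.le).comp continuous_abs).comp_aestronglyMeasurable hFm
  -- Part 2
  have hbound : ∀ x ∈ Ioi (0 : ℝ), |hjmDrift g t f x| ^ p * Real.exp (ν * x)
      ≤ C ^ p * (|gbar x| ^ p * Real.exp (ν * x)) := by
    intro x hx
    have h1 : |hjmDrift g t f x| ^ p ≤ (|gbar x| * C) ^ p :=
      Real.rpow_le_rpow (abs_nonneg _) (hFb x hx) hp0.le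
    calc |hjmDrift g t f x| ^ p * Real.exp (ν * x)
        ≤ (|gbar x| * C) ^ p * Real.exp (ν * x) :=
          mul_le_mul_of_nonneg_right h1 (Real.exp_pos _).le
      _ = C ^ p * (|gbar x| ^ p * Real.exp (ν * x)) := by
          rw [Real.mul_rpow (abs_nonneg _) hC]; ring
  have part2 : IntegrableOn (fun x => |hjmDrift g t f x| ^ p * Real.exp (ν * x)) (Ioi 0) := by
    refine Integrable.mono' (hgbar.const_mul (C ^ p)) hFpm ?_
    filter_upwards [ae_restrict_mem measurableSet_Ioi] with x hx
    rw [Real.norm_of_nonneg (by positivity)]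
    exact hbound x hx
  -- Part 3
  have hle : (∫ x in Ioi (0 : ℝ), |hjmDrift g t f x| ^ p * Real.exp (ν * x)) ≤ C ^ p * I := by
    have heq : (∫ x in Ioi (0 : ℝ), C ^ p * (|gbar x| ^ p * Real.exp (ν * x))) = C ^ p * I := by
      rw [integral_const_mul]
    rw [← heq]
    exact setIntegral_mono_on part2 (hgbar.const_mul (C ^ p)) measurableSet_Ioi hbound
  have hLnn : 0 ≤ ∫ x in Ioi (0 : ℝ), |hjmDrift g t f x| ^ p * Real.exp (ν * x) :=
    setIntegral_nonneg measurableSet_Ioi fun x _ => by positivity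
  refine ⟨part1, part2, ?_⟩
  have hstep : (∫ x in Ioi (0 : ℝ), |hjmDrift g t f x| ^ p * Real.exp (ν * x)) ^ (1 / p)
      ≤ (C ^ p * I) ^ (1 / p) :=
    Real.rpow_le_rpow hLnn hle (by positivity)
  refine hstep.trans_eq ?_
  rw [Real.mul_rpow (Real.rpow_nonneg hC _) hInn, ← Real.rpow_mul hC,
    mul_one_div_cancel hp0.ne', Real.rpow_one, hCdef, sq]
  ring
end

section
/- Let ν > 0, p ≥ 2 and 1/p + 1/q = 1. Suppose there is a function ḡ ∈ L^p_ν such that ‖g(t,x,u)‖_H ≤ |ḡ(x)| for all t, x ∈ [0,∞) and u ∈ ℝ. Then for every t ≥ 0, every measurable f ∈ L^p_ν and every x ∈ [0,∞), |F(t,f)(x)| ≤ (p/(νq))^{1/q} ‖ḡ‖_{ν,p} |ḡ(x)|. -/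
open MeasureTheory Set Real

lemma aux_integral_exp_neg_mul_Ioi {c : ℝ} (hc : 0 < c) :
    (∫ y in Ioi (0 : ℝ), Real.exp (-(c * y))) = 1 / c := by
  have hderiv : ∀ y ∈ Ici (0 : ℝ),
      HasDerivAt (fun y => -Real.exp (-(c * y)) / c) (Real.exp (-(c * y))) y := by
    intro y _
    have h1 : HasDerivAt (fun y : ℝ => -(c * y)) (-c) y := by
      have := ((hasDerivAt_id y).const_mul c).neg; rw [mul_one] at this; exact this
    have h2 := (Real.hasDerivAt_exp (-(c * y))).comp y h1
    have h3 := (h2.neg).div_const c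
    convert h3 using 1
    · rfl
    · rfl
    · rfl
    · rw [mul_neg, neg_neg, mul_div_assoc, div_self hc.ne', mul_one]
  have hint : IntegrableOn (fun y : ℝ => Real.exp (-(c * y))) (Ioi 0) := by
    simpa [neg_mul] using exp_neg_integrableOn_Ioi 0 hc
  have htend : Filter.Tendsto (fun y => -Real.exp (-(c * y)) / c) Filter.atTop (nhds 0) := by
    have h1 : Filter.Tendsto (fun y : ℝ => c * y) Filter.atTop Filter.atTop :=
      Filter.Tendsto.const_mul_atTop hc Filter.tendsto_id
    have h2 : Filter.Tendsto (fun y : ℝ => Real.exp (-(c * y))) Filter.atTop (nhds 0) :=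
      Real.tendsto_exp_neg_atTop_nhds_zero.comp h1
    simpa using (h2.neg).div_const c
  have := MeasureTheory.integral_Ioi_of_hasDerivAt_of_tendsto' hderiv hint htend
  rw [this]
  simp [neg_div]

lemma aux_memLp_of_integrable_rpow {α : Type*} [MeasurableSpace α] {μ : Measure α} {p : ℝ}
    (hp : 1 ≤ p) {F : α → ℝ} (hF : AEStronglyMeasurable F μ) (hFnn : ∀ x, 0 ≤ F x)
    (hint : Integrable (fun x => F x ^ p) μ) : MemLp F (ENNReal.ofReal p) μ := by
  have hp0 : (0 : ℝ) < p := lt_of_lt_of_le one_pos hp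
  have hne0 : ENNReal.ofReal p ≠ 0 := by simp [ENNReal.ofReal_eq_zero, not_le, hp0]
  have hnetop : ENNReal.ofReal p ≠ ⊤ := ENNReal.ofReal_ne_top
  have h1 : MemLp (fun x => ‖F x‖ ^ (ENNReal.ofReal p).toReal) 1 μ := by
    rw [memLp_one_iff_integrable]
    refine hint.congr (Filter.Eventually.of_forall fun x => ?_)
    show F x ^ p = ‖F x‖ ^ (ENNReal.ofReal p).toReal
    rw [Real.norm_of_nonneg (hFnn x), ENNReal.toReal_ofReal hp0.le]
  have h2 : ENNReal.ofReal p / ENNReal.ofReal p = 1 := ENNReal.div_self hne0 hnetop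
  rw [← h2] at h1
  exact (memLp_norm_rpow_iff hF hne0 hnetop).mp h1

/-- Under the pointwise bound `‖g(t,x,u)‖_H ≤ |ḡ(x)|` with `ḡ ∈ L^p_ν`,
for every `t ≥ 0`, measurable `f ∈ L^p_ν` and `x ≥ 0`,
`|F(t,f)(x)| ≤ (p/(νq))^{1/q} ‖ḡ‖_{ν,p} |ḡ(x)|`. -/
theorem stmt_6 {H : Type*} [NormedAddCommGroup H] [InnerProductSpace ℝ H]
    [CompleteSpace H] [TopologicalSpace.SeparableSpace H]
    (ν p q : ℝ) (hν : 0 < ν) (hp : 2 ≤ p) (hpq : 1 / p + 1 / q = 1)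
    (g : ℝ → ℝ → ℝ → H)
    (hgm : StronglyMeasurable fun z : ℝ × ℝ × ℝ => g z.1 z.2.1 z.2.2)
    (gbar : ℝ → ℝ) (hgbarm : Measurable gbar)
    (hgbar : IntegrableOn (fun x => |gbar x| ^ p * Real.exp (ν * x)) (Ioi 0))
    (hb : ∀ t x u : ℝ, 0 ≤ t → 0 ≤ x → ‖g t x u‖ ≤ |gbar x|)
    (t : ℝ) (ht : 0 ≤ t) (f : ℝ → ℝ) (hfm : Measurable f)
    (hf : IntegrableOn (fun x => |f x| ^ p * Real.exp (ν * x)) (Ioi 0)) :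
    ∀ x : ℝ, 0 ≤ x →
      |hjmDrift g t f x| ≤
        (p / (ν * q)) ^ (1 / q) *
          (∫ y in Ioi (0 : ℝ), |gbar y| ^ p * Real.exp (ν * y)) ^ (1 / p) * |gbar x| := by
  intro x hx
  have hp1 : (1 : ℝ) < p := by linarith
  have hp0 : (0 : ℝ) < p := by linarith
  have hcon : Real.HolderConjugate p q := Real.holderConjugate_iff.mpr ⟨hp1, by simpa [one_div] using hpq⟩
  have hq0 : (0 : ℝ) < q := hcon.symm.pos
  have hq1 : (1 : ℝ) < q := hcon.symm.lt
  set C1 : ℝ := ∫ y in Ioi (0 : ℝ), |gbar y| ^ p * Real.exp (ν * y) with hC1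
  have hC1nn : 0 ≤ C1 :=
    integral_nonneg fun y => mul_nonneg (Real.rpow_nonneg (abs_nonneg _) _) (Real.exp_pos _).le
  -- integrability of |gbar|^p e^{νy} on Ioc 0 x
  have hIp : IntegrableOn (fun y => |gbar y| ^ p * Real.exp (ν * y)) (Ioc 0 x) :=
    hgbar.mono_set Ioc_subset_Ioi_self
  -- integrability of |gbar| on Ioc 0 x
  have hIg : IntegrableOn (fun y => |gbar y|) (Ioc 0 x) := by
    refine Integrable.mono' (((integrableOn_const measure_Ioc_lt_top.ne :
        IntegrableOn (fun _ => (1:ℝ)) (Ioc 0 x) volume)).add hIp)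
      hgbarm.abs.aestronglyMeasurable ?_
    filter_upwards [ae_restrict_mem measurableSet_Ioc] with y hy
    rw [Real.norm_of_nonneg (abs_nonneg _)]
    simp only [Pi.add_apply]
    have h3 : |gbar y| ^ p ≤ |gbar y| ^ p * Real.exp (ν * y) := by
      refine le_mul_of_one_le_right (Real.rpow_nonneg (abs_nonneg _) _) ?_
      rw [← Real.exp_zero]
      exact Real.exp_le_exp.mpr (mul_nonneg hν.le hy.1.le)
    rcases le_or_gt (|gbar y|) 1 with h | h
    · have h0 : (0:ℝ) ≤ |gbar y| ^ p * Real.exp (ν * y) :=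
        mul_nonneg (Real.rpow_nonneg (abs_nonneg _) _) (Real.exp_pos _).le
      linarith
    · have h2 : |gbar y| ≤ |gbar y| ^ p := by
        calc |gbar y| = |gbar y| ^ (1 : ℝ) := (Real.rpow_one _).symm
          _ ≤ |gbar y| ^ p := Real.rpow_le_rpow_of_exponent_le h.le hp1.le
      linarith
  -- Step A
  have hA : |hjmDrift g t f x| ≤ |gbar x| * ∫ y in Ioc (0:ℝ) x, |gbar y| := by
    refine (abs_real_inner_le_norm _ _).trans ?_
    refine mul_le_mul (hb t x (f x) ht hx) ?_ (norm_nonneg _) (abs_nonneg _)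
    refine (norm_integral_le_integral_norm _).trans ?_
    refine integral_mono_of_nonneg (Filter.Eventually.of_forall fun y => norm_nonneg _) hIg ?_
    filter_upwards [ae_restrict_mem measurableSet_Ioc] with y hy
    exact hb t y (f y) ht hy.1.le
  -- Hölder setup
  set F : ℝ → ℝ := fun y => |gbar y| * Real.exp (ν * y / p) with hF
  set G : ℝ → ℝ := fun y => Real.exp (-(ν * y / p)) with hG
  have hFnn : ∀ y, 0 ≤ F y := fun y => mul_nonneg (abs_nonneg _) (Real.exp_pos _).le
  have hGnn : ∀ y, 0 ≤ G y := fun y => (Real.exp_pos _).le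
  have hFG : ∀ y, |gbar y| = F y * G y := by
    intro y
    rw [hF, hG, mul_assoc, ← Real.exp_add, add_neg_cancel, Real.exp_zero, mul_one]
  have hFp : ∀ y, F y ^ p = |gbar y| ^ p * Real.exp (ν * y) := by
    intro y
    rw [hF, Real.mul_rpow (abs_nonneg _) (Real.exp_pos _).le, ← Real.exp_mul]
    congr 2
    field_simp
  have hGq : ∀ y, G y ^ q = Real.exp (-(ν * q / p * y)) := by
    intro y
    rw [hG, ← Real.exp_mul]
    congr 1
    ring
  have hc' : (0:ℝ) < ν * q / p := by positivity
  have hFmem : MemLp F (ENNReal.ofReal p) (volume.restrict (Ioc (0:ℝ) x)) := by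
    refine aux_memLp_of_integrable_rpow hp1.le
      ((hgbarm.abs.mul ((measurable_const.mul measurable_id).div_const p).exp).aestronglyMeasurable)
      hFnn ?_
    exact hIp.congr (Filter.Eventually.of_forall fun y => (hFp y).symm)
  have hGint : IntegrableOn (fun y => G y ^ q) (Ioc (0:ℝ) x) := by
    refine ((exp_neg_integrableOn_Ioi 0 hc').mono_set Ioc_subset_Ioi_self).congr ?_
    refine Filter.Eventually.of_forall fun y => ?_
    show Real.exp (-(ν * q / p) * y) = G y ^ q
    rw [hGq y, neg_mul]
  have hGmem : MemLp G (ENNReal.ofReal q) (volume.restrict (Ioc (0:ℝ) x)) := by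
    refine aux_memLp_of_integrable_rpow hq1.le
      (((measurable_const.mul measurable_id).div_const p).neg.exp.aestronglyMeasurable) hGnn hGint
  have hH := MeasureTheory.integral_mul_le_Lp_mul_Lq_of_nonneg hcon
    (Filter.Eventually.of_forall hFnn) (Filter.Eventually.of_forall hGnn) hFmem hGmem
  -- bound the two factors
  have hFpbound : (∫ y in Ioc (0:ℝ) x, F y ^ p) ≤ C1 := by
    have heq : (∫ y in Ioc (0:ℝ) x, F y ^ p)
        = ∫ y in Ioc (0:ℝ) x, |gbar y| ^ p * Real.exp (ν * y) :=
      integral_congr_ae (Filter.Eventually.of_forall hFp)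
    rw [heq, hC1]
    refine setIntegral_mono_set hgbar ?_ (HasSubset.Subset.eventuallyLE Ioc_subset_Ioi_self)
    exact Filter.Eventually.of_forall fun y =>
      mul_nonneg (Real.rpow_nonneg (abs_nonneg _) _) (Real.exp_pos _).le
  have hGqbound : (∫ y in Ioc (0:ℝ) x, G y ^ q) ≤ p / (ν * q) := by
    have heq : (∫ y in Ioc (0:ℝ) x, G y ^ q)
        = ∫ y in Ioc (0:ℝ) x, Real.exp (-(ν * q / p * y)) :=
      integral_congr_ae (Filter.Eventually.of_forall hGq)
    rw [heq]
    have h1 : (∫ y in Ioc (0:ℝ) x, Real.exp (-(ν * q / p * y)))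
        ≤ ∫ y in Ioi (0:ℝ), Real.exp (-(ν * q / p * y)) := by
      refine setIntegral_mono_set (by simpa [neg_mul] using exp_neg_integrableOn_Ioi 0 hc')
        (Filter.Eventually.of_forall fun y => (Real.exp_pos _).le)
        (HasSubset.Subset.eventuallyLE Ioc_subset_Ioi_self)
    refine h1.trans ?_
    rw [aux_integral_exp_neg_mul_Ioi hc', one_div, inv_div]
  -- combine
  have hFint_nn : 0 ≤ ∫ y in Ioc (0:ℝ) x, F y ^ p :=
    integral_nonneg fun y => Real.rpow_nonneg (hFnn y) _
  have hGint_nn : 0 ≤ ∫ y in Ioc (0:ℝ) x, G y ^ q :=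
    integral_nonneg fun y => Real.rpow_nonneg (hGnn y) _
  have hB : (∫ y in Ioc (0:ℝ) x, |gbar y|) ≤ (p / (ν * q)) ^ (1/q) * C1 ^ (1/p) := by
    have h0 : (∫ y in Ioc (0:ℝ) x, |gbar y|) = ∫ y in Ioc (0:ℝ) x, F y * G y :=
      integral_congr_ae (Filter.Eventually.of_forall hFG)
    rw [h0]
    refine hH.trans ?_
    rw [mul_comm]
    refine mul_le_mul (Real.rpow_le_rpow hGint_nn hGqbound (by positivity))
      (Real.rpow_le_rpow hFint_nn hFpbound (by positivity))
      (Real.rpow_nonneg hFint_nn _) (Real.rpow_nonneg (by positivity) _)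
  calc |hjmDrift g t f x| ≤ |gbar x| * ∫ y in Ioc (0:ℝ) x, |gbar y| := hA
    _ ≤ |gbar x| * ((p / (ν * q)) ^ (1/q) * C1 ^ (1/p)) :=
        mul_le_mul_of_nonneg_left hB (abs_nonneg _)
    _ = (p / (ν * q)) ^ (1/q) * C1 ^ (1/p) * |gbar x| := by ring
end

section
/- Let ν > 0, p ≥ 2 and 1/p + 1/q = 1. Suppose there are functions ḡ ∈ L^p_ν and ĝ ∈ L^p_ν ∩ L^∞([0,∞)) such that for all t, x ∈ [0,∞) and u, v ∈ ℝ: ‖g(t,x,u)‖_H ≤ |ḡ(x)| and ‖g(t,x,u) − g(t,x,v)‖_H ≤ |ĝ(x)| |u − v|. Then for every t ≥ 0, the map F(t,·) : L^p_ν → L^p_ν is globally Lipschitz with constant independent of t: for all f₁, f₂ ∈ L^p_ν, ‖F(t,f₁) − F(t,f₂)‖_{ν,p} ≤ 4 (p/(νq))^{1/q} ‖ĝ‖_{L^∞} ‖ḡ‖_{ν,p} ‖f₁ − f₂‖_{ν,p}. -/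
open MeasureTheory Set Real

private lemma aux_rpow_add_le {p : ℝ} (hp : 0 ≤ p) {a b : ℝ} (ha : 0 ≤ a) (hb : 0 ≤ b) :
    (a + b) ^ p ≤ 2 ^ p * (a ^ p + b ^ p) := by
  have hmax : a + b ≤ 2 * max a b := by
    rcases le_total a b with h | h
    · rw [max_eq_right h]; linarith
    · rw [max_eq_left h]; linarith
  calc (a + b) ^ p ≤ (2 * max a b) ^ p :=
        Real.rpow_le_rpow (by positivity) hmax hp
    _ = 2 ^ p * (max a b) ^ p := Real.mul_rpow (by norm_num) (le_max_of_le_left ha)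
    _ ≤ 2 ^ p * (a ^ p + b ^ p) := by
        apply mul_le_mul_of_nonneg_left _ (Real.rpow_nonneg (by norm_num) p)
        rcases le_total a b with h | h
        · rw [max_eq_right h]; exact le_add_of_nonneg_left (Real.rpow_nonneg ha p)
        · rw [max_eq_left h]; exact le_add_of_nonneg_right (Real.rpow_nonneg hb p)

private lemma aux_abs_le_one_add {p : ℝ} (hp : 1 ≤ p) (a : ℝ) : |a| ≤ 1 + |a| ^ p := by
  rcases le_total |a| 1 with h | h
  · exact h.trans (le_add_of_nonneg_right (Real.rpow_nonneg (abs_nonneg a) p))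
  · calc |a| = |a| ^ (1 : ℝ) := (Real.rpow_one _).symm
      _ ≤ |a| ^ p := Real.rpow_le_rpow_of_exponent_le h hp
      _ ≤ 1 + |a| ^ p := le_add_of_nonneg_left zero_le_one

private lemma aux_memLp {p : ℝ} (hp : 0 < p) {μ : Measure ℝ} {f : ℝ → ℝ}
    (hm : AEStronglyMeasurable f μ) (h : Integrable (fun x => |f x| ^ p) μ) :
    MemLp f (ENNReal.ofReal p) μ := by
  have hne : ENNReal.ofReal p ≠ 0 := by simp [ENNReal.ofReal_eq_zero, not_le, hp]
  rw [← memLp_norm_rpow_iff hm hne ENNReal.ofReal_ne_top,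
    ENNReal.div_self hne ENNReal.ofReal_ne_top, memLp_one_iff_integrable]
  have he : (fun x : ℝ => ‖f x‖ ^ (ENNReal.ofReal p).toReal) = fun x => |f x| ^ p := by
    ext x; rw [ENNReal.toReal_ofReal hp.le, Real.norm_eq_abs]
  rwa [he]

private lemma aux_meas {f : ℝ → ℝ} (hf : Measurable f) (ν p : ℝ) :
    Measurable fun x => |f x| ^ p * Real.exp (ν * x) := by
  have h1 : Measurable fun x : ℝ => |f x| ^ p := by measurability
  exact h1.mul ((measurable_const.mul measurable_id).exp)

private lemma aux_exp_integral {b : ℝ} (hb : 0 < b) :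
    ∫ y in Ioi (0:ℝ), Real.exp (-(b * y)) = 1 / b := by
  have h := Real.integral_rpow_mul_exp_neg_mul_Ioi zero_lt_one hb
  simpa using h

private lemma aux_holder {ν p q : ℝ} (hν : 0 < ν) (hpq : p.HolderConjugate q) {h : ℝ → ℝ}
    (hm : Measurable h)
    (hint : IntegrableOn (fun y => |h y| ^ p * Real.exp (ν * y)) (Ioi 0)) (x : ℝ) :
    ∫ y in Ioc (0:ℝ) x, |h y| ≤
      (∫ y in Ioi (0:ℝ), |h y| ^ p * Real.exp (ν * y)) ^ (1/p) * (p / (ν * q)) ^ (1/q) := by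
  have hp0 : (0:ℝ) < p := hpq.pos
  have hq0 : (0:ℝ) < q := hpq.symm.pos
  set a : ℝ := ν / p with ha
  have ha0 : 0 < a := div_pos hν hp0
  set F : ℝ → ℝ := fun y => |h y| * Real.exp (a * y) with hF
  set G : ℝ → ℝ := fun y => Real.exp (-(a * y)) with hG
  have hFG : ∀ y, F y * G y = |h y| := by
    intro y
    simp only [hF, hG, mul_assoc, ← Real.exp_add]
    simp
  have hFp : ∀ y, F y ^ p = |h y| ^ p * Real.exp (ν * y) := by
    intro y
    have hay : a * y * p = ν * y := by rw [ha]; field_simp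
    rw [hF, Real.mul_rpow (abs_nonneg _) (Real.exp_pos _).le, ← Real.exp_mul, hay]
  have hGq : ∀ y, G y ^ q = Real.exp (-(ν * q / p * y)) := by
    intro y
    have hay : -(a * y) * q = -(ν * q / p * y) := by
      rw [ha]; rw [neg_mul, neg_inj, div_mul_eq_mul_div, div_mul_eq_mul_div, mul_div_assoc,
        mul_div_assoc]; ring
    rw [hG, ← Real.exp_mul, hay]
  have hc0 : 0 < ν * q / p := by positivity
  have hFm : Measurable F := (hm.abs).mul ((measurable_const.mul measurable_id).exp)
  have hGm : Measurable G := ((measurable_const.mul measurable_id).neg).exp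
  have hFLp : MemLp F (ENNReal.ofReal p) (volume.restrict (Ioc 0 x)) := by
    apply aux_memLp hp0 hFm.aestronglyMeasurable
    have : (fun y : ℝ => |F y| ^ p) = fun y => |h y| ^ p * Real.exp (ν * y) := by
      ext y
      rw [abs_of_nonneg (by positivity : (0:ℝ) ≤ F y), hFp y]
    rw [this]
    exact hint.mono_set Ioc_subset_Ioi_self
  have hGLq : MemLp G (ENNReal.ofReal q) (volume.restrict (Ioc 0 x)) := by
    apply aux_memLp hq0 hGm.aestronglyMeasurable
    have : (fun y : ℝ => |G y| ^ q) = fun y => Real.exp (-(ν * q / p) * y) := by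
      ext y
      rw [abs_of_nonneg (Real.exp_pos _).le, hGq y, neg_mul]
    rw [this]
    exact (exp_neg_integrableOn_Ioi 0 hc0).mono_set Ioc_subset_Ioi_self
  have happ := integral_mul_le_Lp_mul_Lq_of_nonneg hpq
    (Filter.Eventually.of_forall fun y => by positivity)
    (Filter.Eventually.of_forall fun y => (Real.exp_pos _).le) hFLp hGLq
  have hL : ∫ y in Ioc (0:ℝ) x, F y * G y = ∫ y in Ioc (0:ℝ) x, |h y| := by
    congr 1; ext y; exact hFG y
  have hf1 : ∫ y in Ioc (0:ℝ) x, F y ^ p ≤ ∫ y in Ioi (0:ℝ), |h y| ^ p * Real.exp (ν * y) := by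
    have : ∫ y in Ioc (0:ℝ) x, F y ^ p = ∫ y in Ioc (0:ℝ) x, |h y| ^ p * Real.exp (ν * y) := by
      congr 1; ext y; exact hFp y
    rw [this]
    exact setIntegral_mono_set hint
      (Filter.Eventually.of_forall fun y => by positivity)
      (HasSubset.Subset.eventuallyLE Ioc_subset_Ioi_self)
  have hf2 : ∫ y in Ioc (0:ℝ) x, G y ^ q ≤ p / (ν * q) := by
    have e1 : ∫ y in Ioc (0:ℝ) x, G y ^ q = ∫ y in Ioc (0:ℝ) x, Real.exp (-(ν * q / p * y)) := by
      congr 1; ext y; exact hGq y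
    have e2 : ∫ y in Ioi (0:ℝ), Real.exp (-(ν * q / p * y)) = p / (ν * q) := by
      rw [aux_exp_integral hc0, one_div, inv_div]
    rw [e1]
    calc ∫ y in Ioc (0:ℝ) x, Real.exp (-(ν * q / p * y))
        ≤ ∫ y in Ioi (0:ℝ), Real.exp (-(ν * q / p * y)) := by
          apply setIntegral_mono_set
          · have := exp_neg_integrableOn_Ioi 0 hc0
            simpa [neg_mul] using this
          · exact Filter.Eventually.of_forall fun y => (Real.exp_pos _).le
          · exact HasSubset.Subset.eventuallyLE Ioc_subset_Ioi_self
      _ = p / (ν * q) := e2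
  have h1nn : 0 ≤ ∫ y in Ioc (0:ℝ) x, F y ^ p :=
    setIntegral_nonneg measurableSet_Ioc fun y _ => by positivity
  have h2nn : 0 ≤ ∫ y in Ioc (0:ℝ) x, G y ^ q :=
    setIntegral_nonneg measurableSet_Ioc fun y _ => Real.rpow_nonneg (Real.exp_pos _).le _
  calc ∫ y in Ioc (0:ℝ) x, |h y| = ∫ y in Ioc (0:ℝ) x, F y * G y := hL.symm
    _ ≤ (∫ y in Ioc (0:ℝ) x, F y ^ p) ^ (1/p) * (∫ y in Ioc (0:ℝ) x, G y ^ q) ^ (1/q) := happ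
    _ ≤ (∫ y in Ioi (0:ℝ), |h y| ^ p * Real.exp (ν * y)) ^ (1/p) * (p / (ν * q)) ^ (1/q) := by
        apply mul_le_mul
        · exact Real.rpow_le_rpow h1nn hf1 (by positivity)
        · exact Real.rpow_le_rpow h2nn hf2 (by positivity)
        · exact Real.rpow_nonneg h2nn _
        · exact Real.rpow_nonneg (h1nn.trans hf1) _

/-- Under `‖g(t,x,u)‖_H ≤ |ḡ(x)|` and
`‖g(t,x,u) − g(t,x,v)‖_H ≤ |ĝ(x)| |u − v|` with `ḡ ∈ L^p_ν` and `ĝ ∈ L^p_ν ∩ L^∞`,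
the map `F(t,·)` is globally Lipschitz on `L^p_ν`, uniformly in `t`:
`‖F(t,f₁) − F(t,f₂)‖_{ν,p} ≤ 4 (p/(νq))^{1/q} ‖ĝ‖_{L^∞} ‖ḡ‖_{ν,p} ‖f₁ − f₂‖_{ν,p}`. -/
theorem stmt_7 {H : Type*} [NormedAddCommGroup H] [InnerProductSpace ℝ H]
    [CompleteSpace H] [TopologicalSpace.SeparableSpace H]
    (ν p q : ℝ) (hν : 0 < ν) (hp : 2 ≤ p) (hpq : 1 / p + 1 / q = 1)
    (g : ℝ → ℝ → ℝ → H)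
    (hgm : StronglyMeasurable fun z : ℝ × ℝ × ℝ => g z.1 z.2.1 z.2.2)
    (gbar ghat : ℝ → ℝ) (hgbarm : Measurable gbar) (hghatm : Measurable ghat)
    (hgbar : IntegrableOn (fun x => |gbar x| ^ p * Real.exp (ν * x)) (Ioi 0))
    (hghat : IntegrableOn (fun x => |ghat x| ^ p * Real.exp (ν * x)) (Ioi 0))
    (hghatInf : eLpNormEssSup ghat (volume.restrict (Ioi 0)) ≠ ⊤)
    (hb : ∀ t x u : ℝ, 0 ≤ t → 0 ≤ x → ‖g t x u‖ ≤ |gbar x|)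
    (hlip : ∀ t x u v : ℝ, 0 ≤ t → 0 ≤ x → ‖g t x u - g t x v‖ ≤ |ghat x| * |u - v|)
    (t : ℝ) (ht : 0 ≤ t) (f₁ f₂ : ℝ → ℝ) (hf₁m : Measurable f₁) (hf₂m : Measurable f₂)
    (hf₁ : IntegrableOn (fun x => |f₁ x| ^ p * Real.exp (ν * x)) (Ioi 0))
    (hf₂ : IntegrableOn (fun x => |f₂ x| ^ p * Real.exp (ν * x)) (Ioi 0)) :
    (∫ x in Ioi (0 : ℝ), |hjmDrift g t f₁ x - hjmDrift g t f₂ x| ^ p *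
        Real.exp (ν * x)) ^ (1 / p) ≤
      4 * (p / (ν * q)) ^ (1 / q) *
        (eLpNormEssSup ghat (volume.restrict (Ioi 0))).toReal *
        (∫ x in Ioi (0 : ℝ), |gbar x| ^ p * Real.exp (ν * x)) ^ (1 / p) *
        (∫ x in Ioi (0 : ℝ), |f₁ x - f₂ x| ^ p * Real.exp (ν * x)) ^ (1 / p) := by
  have hp1 : (1:ℝ) < p := by linarith
  have hpq' : p.HolderConjugate q := Real.holderConjugate_iff.2 ⟨hp1, by simpa only [one_div] using hpq⟩
  have hp0 : (0:ℝ) < p := hpq'.pos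
  have hq0 : (0:ℝ) < q := hpq'.symm.pos
  set K : ℝ := (eLpNormEssSup ghat (volume.restrict (Ioi 0))).toReal with hKdef
  have hK0 : 0 ≤ K := ENNReal.toReal_nonneg
  set C : ℝ := (p / (ν * q)) ^ (1 / q) with hCdef
  have hC0 : (0:ℝ) ≤ C := by rw [hCdef]; exact Real.rpow_nonneg (by positivity) _
  set Gp : ℝ := ∫ x in Ioi (0:ℝ), |gbar x| ^ p * Real.exp (ν * x) with hGpdef
  set Dp : ℝ := ∫ x in Ioi (0:ℝ), |f₁ x - f₂ x| ^ p * Real.exp (ν * x) with hDpdef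
  have hGp0 : 0 ≤ Gp := by
    rw [hGpdef]; exact setIntegral_nonneg measurableSet_Ioi fun x _ => by positivity
  have hDp0 : 0 ≤ Dp := by
    rw [hDpdef]; exact setIntegral_nonneg measurableSet_Ioi fun x _ => by positivity
  -- integrability of the weighted p-th power of the difference
  have hΔ : IntegrableOn (fun x => |f₁ x - f₂ x| ^ p * Real.exp (ν * x)) (Ioi 0) := by
    have hbd := (hf₁.const_mul ((2:ℝ) ^ p)).add (hf₂.const_mul ((2:ℝ) ^ p))
    apply Integrable.mono' hbd
    · exact (aux_meas (hf₁m.sub hf₂m) ν p).aestronglyMeasurable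
    · filter_upwards with x
      rw [Real.norm_of_nonneg (by positivity)]
      have h1 : |f₁ x - f₂ x| ^ p ≤ 2 ^ p * (|f₁ x| ^ p + |f₂ x| ^ p) :=
        le_trans (Real.rpow_le_rpow (abs_nonneg _) (abs_sub _ _) hp0.le)
          (aux_rpow_add_le hp0.le (abs_nonneg _) (abs_nonneg _))
      calc |f₁ x - f₂ x| ^ p * Real.exp (ν * x)
          ≤ (2 ^ p * (|f₁ x| ^ p + |f₂ x| ^ p)) * Real.exp (ν * x) :=
            mul_le_mul_of_nonneg_right h1 (Real.exp_pos _).le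
        _ = 2 ^ p * (|f₁ x| ^ p * Real.exp (ν * x)) + 2 ^ p * (|f₂ x| ^ p * Real.exp (ν * x)) := by
            ring
  -- local integrability of |h| on Ioc 0 x from weighted p-th power integrability
  have hone : ∀ (h : ℝ → ℝ), Measurable h →
      IntegrableOn (fun y => |h y| ^ p * Real.exp (ν * y)) (Ioi 0) →
      ∀ x : ℝ, IntegrableOn (fun y => |h y|) (Ioc 0 x) := by
    intro h hm hint x
    have hbd : IntegrableOn (fun y => 1 + |h y| ^ p * Real.exp (ν * y)) (Ioc 0 x) :=
      (integrableOn_const measure_Ioc_lt_top.ne).add (hint.mono_set Ioc_subset_Ioi_self)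
    apply Integrable.mono' hbd hm.abs.aestronglyMeasurable
    filter_upwards [ae_restrict_mem measurableSet_Ioc] with y hy
    rw [Real.norm_of_nonneg (abs_nonneg _)]
    have he : (1:ℝ) ≤ Real.exp (ν * y) := by
      rw [← Real.exp_zero]
      exact Real.exp_le_exp.mpr (mul_nonneg hν.le hy.1.le)
    have hnn := Real.rpow_nonneg (abs_nonneg (h y)) p
    calc |h y| ≤ 1 + |h y| ^ p := aux_abs_le_one_add hp1.le _
      _ ≤ 1 + |h y| ^ p * Real.exp (ν * y) := by nlinarith
  have hgbarIoc : ∀ x : ℝ, IntegrableOn (fun y => |gbar y|) (Ioc 0 x) := hone gbar hgbarm hgbar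
  have hΔIoc : ∀ x : ℝ, IntegrableOn (fun y => |f₁ y - f₂ y|) (Ioc 0 x) :=
    hone (fun y => f₁ y - f₂ y) (hf₁m.sub hf₂m) hΔ
  -- measurability and local integrability of the integrand of the inner integral
  have hφm : ∀ (f : ℝ → ℝ), Measurable f → StronglyMeasurable fun y : ℝ => g t y (f y) :=
    fun f hf => hgm.comp_measurable (measurable_const.prodMk (measurable_id.prodMk hf))
  have hφint : ∀ (f : ℝ → ℝ), Measurable f →
      ∀ x : ℝ, IntegrableOn (fun y => g t y (f y)) (Ioc 0 x) := by
    intro f hf x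
    apply Integrable.mono' (hgbarIoc x) (hφm f hf).aestronglyMeasurable
    filter_upwards [ae_restrict_mem measurableSet_Ioc] with y hy
    exact hb t y (f y) ht hy.1.le
  -- the two Hölder estimates
  have hGle : ∀ x : ℝ, ∫ y in Ioc (0:ℝ) x, |gbar y| ≤ Gp ^ (1/p) * C := by
    intro x
    rw [hGpdef, hCdef]
    exact aux_holder hν hpq' hgbarm hgbar x
  have hDle : ∀ x : ℝ, ∫ y in Ioc (0:ℝ) x, |f₁ y - f₂ y| ≤ Dp ^ (1/p) * C := by
    intro x
    rw [hDpdef, hCdef]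
    exact aux_holder hν hpq' (hf₁m.sub hf₂m) hΔ x
  -- the essential sup bound
  have hKae : ∀ᵐ x ∂(volume.restrict (Ioi (0:ℝ))), |ghat x| ≤ K := by
    filter_upwards [ae_le_eLpNormEssSup (f := ghat) (μ := volume.restrict (Ioi (0:ℝ)))] with x hx
    rw [hKdef]
    have h2 := ENNReal.toReal_mono hghatInf hx
    simpa [Real.norm_eq_abs] using h2
  have hKΔIoc : ∀ x : ℝ, IntegrableOn (fun y => K * |f₁ y - f₂ y|) (Ioc 0 x) :=
    fun x => (hΔIoc x).const_mul K
  have hgΔint : ∀ x : ℝ, IntegrableOn (fun y => |ghat y| * |f₁ y - f₂ y|) (Ioc 0 x) := by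
    intro x
    apply Integrable.mono' (hKΔIoc x) ((hghatm.abs.mul (hf₁m.sub hf₂m).abs).aestronglyMeasurable)
    filter_upwards [ae_restrict_of_ae_restrict_of_subset Ioc_subset_Ioi_self hKae] with y hy
    show ‖|ghat y| * |f₁ y - f₂ y|‖ ≤ _
    rw [Real.norm_of_nonneg (by positivity)]
    exact mul_le_mul_of_nonneg_right hy (abs_nonneg _)
  have hghatΔ : ∀ x : ℝ, ∫ y in Ioc (0:ℝ) x, |ghat y| * |f₁ y - f₂ y| ≤
      K * (Dp ^ (1/p) * C) := by
    intro x
    have h1 : ∫ y in Ioc (0:ℝ) x, |ghat y| * |f₁ y - f₂ y| ≤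
        ∫ y in Ioc (0:ℝ) x, K * |f₁ y - f₂ y| := by
      apply integral_mono_of_nonneg
      · filter_upwards with y; positivity
      · exact hKΔIoc x
      · filter_upwards [ae_restrict_of_ae_restrict_of_subset Ioc_subset_Ioi_self hKae] with y hy
        exact mul_le_mul_of_nonneg_right hy (abs_nonneg _)
    rw [integral_const_mul] at h1
    exact h1.trans (mul_le_mul_of_nonneg_left (hDle x) hK0)
  -- key pointwise bound
  have key : ∀ᵐ x ∂(volume.restrict (Ioi (0:ℝ))),
      |hjmDrift g t f₁ x - hjmDrift g t f₂ x| ^ p * Real.exp (ν * x) ≤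
        (2 * (K * C)) ^ p * ((Gp ^ (1/p)) ^ p * (|f₁ x - f₂ x| ^ p * Real.exp (ν * x)) +
          (Dp ^ (1/p)) ^ p * (|gbar x| ^ p * Real.exp (ν * x))) := by
    filter_upwards [hKae, ae_restrict_mem measurableSet_Ioi] with x hKx hx
    have hx0 : (0:ℝ) < x := hx
    have hsplit : hjmDrift g t f₁ x - hjmDrift g t f₂ x =
        @inner ℝ H _ (g t x (f₁ x) - g t x (f₂ x)) (∫ y in Ioc (0:ℝ) x, g t y (f₁ y)) +
        @inner ℝ H _ (g t x (f₂ x))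
          ((∫ y in Ioc (0:ℝ) x, g t y (f₁ y)) - ∫ y in Ioc (0:ℝ) x, g t y (f₂ y)) := by
      simp only [hjmDrift, inner_sub_left, inner_sub_right]
      ring
    have hA : ‖g t x (f₁ x) - g t x (f₂ x)‖ ≤ K * |f₁ x - f₂ x| := by
      refine (hlip t x (f₁ x) (f₂ x) ht hx0.le).trans ?_
      exact mul_le_mul_of_nonneg_right hKx (abs_nonneg _)
    have hA2 : ‖g t x (f₂ x)‖ ≤ |gbar x| := hb t x (f₂ x) ht hx0.le
    have hI1 : ‖∫ y in Ioc (0:ℝ) x, g t y (f₁ y)‖ ≤ Gp ^ (1/p) * C := by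
      calc ‖∫ y in Ioc (0:ℝ) x, g t y (f₁ y)‖
          ≤ ∫ y in Ioc (0:ℝ) x, ‖g t y (f₁ y)‖ := norm_integral_le_integral_norm _
        _ ≤ ∫ y in Ioc (0:ℝ) x, |gbar y| := by
            apply integral_mono_of_nonneg
            · filter_upwards with y; exact norm_nonneg _
            · exact hgbarIoc x
            · filter_upwards [ae_restrict_mem measurableSet_Ioc] with y hy
              exact hb t y (f₁ y) ht hy.1.le
        _ ≤ Gp ^ (1/p) * C := hGle x
    have hI12 : ‖(∫ y in Ioc (0:ℝ) x, g t y (f₁ y)) - ∫ y in Ioc (0:ℝ) x, g t y (f₂ y)‖ ≤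
        K * (Dp ^ (1/p) * C) := by
      have hsub : (∫ y in Ioc (0:ℝ) x, g t y (f₁ y)) - ∫ y in Ioc (0:ℝ) x, g t y (f₂ y) =
          ∫ y in Ioc (0:ℝ) x, (g t y (f₁ y) - g t y (f₂ y)) :=
        (integral_sub (hφint f₁ hf₁m x) (hφint f₂ hf₂m x)).symm
      rw [hsub]
      calc ‖∫ y in Ioc (0:ℝ) x, (g t y (f₁ y) - g t y (f₂ y))‖
          ≤ ∫ y in Ioc (0:ℝ) x, ‖g t y (f₁ y) - g t y (f₂ y)‖ := norm_integral_le_integral_norm _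
        _ ≤ ∫ y in Ioc (0:ℝ) x, |ghat y| * |f₁ y - f₂ y| := by
            apply integral_mono_of_nonneg
            · filter_upwards with y; exact norm_nonneg _
            · exact hgΔint x
            · filter_upwards [ae_restrict_mem measurableSet_Ioc] with y hy
              exact hlip t y (f₁ y) (f₂ y) ht hy.1.le
        _ ≤ K * (Dp ^ (1/p) * C) := hghatΔ x
    have habs : |hjmDrift g t f₁ x - hjmDrift g t f₂ x| ≤
        K * C * (Gp ^ (1/p) * |f₁ x - f₂ x| + Dp ^ (1/p) * |gbar x|) := by
      rw [hsplit]
      calc |@inner ℝ H _ (g t x (f₁ x) - g t x (f₂ x)) (∫ y in Ioc (0:ℝ) x, g t y (f₁ y)) +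
            @inner ℝ H _ (g t x (f₂ x))
              ((∫ y in Ioc (0:ℝ) x, g t y (f₁ y)) - ∫ y in Ioc (0:ℝ) x, g t y (f₂ y))|
          ≤ |@inner ℝ H _ (g t x (f₁ x) - g t x (f₂ x)) (∫ y in Ioc (0:ℝ) x, g t y (f₁ y))| +
            |@inner ℝ H _ (g t x (f₂ x))
              ((∫ y in Ioc (0:ℝ) x, g t y (f₁ y)) - ∫ y in Ioc (0:ℝ) x, g t y (f₂ y))| :=
            abs_add_le _ _
        _ ≤ ‖g t x (f₁ x) - g t x (f₂ x)‖ * ‖∫ y in Ioc (0:ℝ) x, g t y (f₁ y)‖ +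
            ‖g t x (f₂ x)‖ *
              ‖(∫ y in Ioc (0:ℝ) x, g t y (f₁ y)) - ∫ y in Ioc (0:ℝ) x, g t y (f₂ y)‖ :=
            add_le_add (abs_real_inner_le_norm _ _) (abs_real_inner_le_norm _ _)
        _ ≤ (K * |f₁ x - f₂ x|) * (Gp ^ (1/p) * C) + |gbar x| * (K * (Dp ^ (1/p) * C)) := by
            apply add_le_add
            · exact mul_le_mul hA hI1 (norm_nonneg _) (by positivity)
            · exact mul_le_mul hA2 hI12 (norm_nonneg _) (abs_nonneg _)
        _ = K * C * (Gp ^ (1/p) * |f₁ x - f₂ x| + Dp ^ (1/p) * |gbar x|) := by ring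
    have hsum0 : 0 ≤ Gp ^ (1/p) * |f₁ x - f₂ x| + Dp ^ (1/p) * |gbar x| := by positivity
    have hKC0 : 0 ≤ K * C := mul_nonneg hK0 hC0
    have hstep : (K * C * (Gp ^ (1/p) * |f₁ x - f₂ x| + Dp ^ (1/p) * |gbar x|)) ^ p ≤
        (2 * (K * C)) ^ p * ((Gp ^ (1/p)) ^ p * |f₁ x - f₂ x| ^ p +
          (Dp ^ (1/p)) ^ p * |gbar x| ^ p) := by
      rw [Real.mul_rpow hKC0 hsum0]
      calc (K * C) ^ p * (Gp ^ (1/p) * |f₁ x - f₂ x| + Dp ^ (1/p) * |gbar x|) ^ p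
          ≤ (K * C) ^ p * (2 ^ p * ((Gp ^ (1/p) * |f₁ x - f₂ x|) ^ p +
              (Dp ^ (1/p) * |gbar x|) ^ p)) :=
            mul_le_mul_of_nonneg_left
              (aux_rpow_add_le hp0.le (by positivity) (by positivity))
              (Real.rpow_nonneg hKC0 _)
        _ = (2 * (K * C)) ^ p * ((Gp ^ (1/p)) ^ p * |f₁ x - f₂ x| ^ p +
              (Dp ^ (1/p)) ^ p * |gbar x| ^ p) := by
            rw [Real.mul_rpow (by norm_num : (0:ℝ) ≤ 2) hKC0,
              Real.mul_rpow (Real.rpow_nonneg hGp0 _) (abs_nonneg _),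
              Real.mul_rpow (Real.rpow_nonneg hDp0 _) (abs_nonneg _)]
            ring
    calc |hjmDrift g t f₁ x - hjmDrift g t f₂ x| ^ p * Real.exp (ν * x)
        ≤ (K * C * (Gp ^ (1/p) * |f₁ x - f₂ x| + Dp ^ (1/p) * |gbar x|)) ^ p *
            Real.exp (ν * x) :=
          mul_le_mul_of_nonneg_right (Real.rpow_le_rpow (abs_nonneg _) habs hp0.le)
            (Real.exp_pos _).le
      _ ≤ ((2 * (K * C)) ^ p * ((Gp ^ (1/p)) ^ p * |f₁ x - f₂ x| ^ p +
            (Dp ^ (1/p)) ^ p * |gbar x| ^ p)) * Real.exp (ν * x) :=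
          mul_le_mul_of_nonneg_right hstep (Real.exp_pos _).le
      _ = (2 * (K * C)) ^ p * ((Gp ^ (1/p)) ^ p * (|f₁ x - f₂ x| ^ p * Real.exp (ν * x)) +
            (Dp ^ (1/p)) ^ p * (|gbar x| ^ p * Real.exp (ν * x))) := by ring
  -- integrate the pointwise bound
  have hIntBound : (∫ x in Ioi (0:ℝ),
      |hjmDrift g t f₁ x - hjmDrift g t f₂ x| ^ p * Real.exp (ν * x)) ≤
      (2 * (K * C)) ^ p * ((Gp ^ (1/p)) ^ p * Dp + (Dp ^ (1/p)) ^ p * Gp) := by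
    have hbi : IntegrableOn (fun x => (2 * (K * C)) ^ p *
        ((Gp ^ (1/p)) ^ p * (|f₁ x - f₂ x| ^ p * Real.exp (ν * x)) +
         (Dp ^ (1/p)) ^ p * (|gbar x| ^ p * Real.exp (ν * x)))) (Ioi 0) :=
      ((hΔ.const_mul _).add (hgbar.const_mul _)).const_mul _
    have hmono := integral_mono_of_nonneg
      (Filter.Eventually.of_forall fun x => by positivity) hbi key
    refine hmono.trans (le_of_eq ?_)
    rw [integral_const_mul, integral_add (hΔ.const_mul _) (hgbar.const_mul _),
      integral_const_mul, integral_const_mul, ← hDpdef, ← hGpdef]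
  have hLHS0 : 0 ≤ ∫ x in Ioi (0:ℝ),
      |hjmDrift g t f₁ x - hjmDrift g t f₂ x| ^ p * Real.exp (ν * x) :=
    setIntegral_nonneg measurableSet_Ioi fun x _ => by positivity
  have hGpow : (Gp ^ (1/p)) ^ p = Gp := by
    rw [← Real.rpow_mul hGp0, one_div, inv_mul_cancel₀ hp0.ne', Real.rpow_one]
  have hDpow : (Dp ^ (1/p)) ^ p = Dp := by
    rw [← Real.rpow_mul hDp0, one_div, inv_mul_cancel₀ hp0.ne', Real.rpow_one]
  have hfinal : ((2 * (K * C)) ^ p * ((Gp ^ (1/p)) ^ p * Dp + (Dp ^ (1/p)) ^ p * Gp)) ^ (1/p) ≤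
      4 * C * K * Gp ^ (1/p) * Dp ^ (1/p) := by
    rw [hGpow, hDpow]
    have h2 : (2 * (K * C)) ^ p * (Gp * Dp + Dp * Gp) =
        (2 * (K * C)) ^ p * (2 * (Gp * Dp)) := by ring
    rw [h2]
    have hKC20 : (0:ℝ) ≤ 2 * (K * C) := by positivity
    rw [Real.mul_rpow (Real.rpow_nonneg hKC20 _) (by positivity),
      Real.mul_rpow (by norm_num : (0:ℝ) ≤ 2) (mul_nonneg hGp0 hDp0),
      Real.mul_rpow hGp0 hDp0,
      ← Real.rpow_mul hKC20, mul_one_div, div_self hp0.ne', Real.rpow_one]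
    have h2p : (2:ℝ) ^ (1/p) ≤ 2 := by
      calc (2:ℝ) ^ (1/p) ≤ 2 ^ (1:ℝ) :=
            Real.rpow_le_rpow_of_exponent_le one_le_two
              (by rw [div_le_one hp0]; exact hp1.le)
        _ = 2 := Real.rpow_one 2
    have hGD0 : 0 ≤ Gp ^ (1/p) * Dp ^ (1/p) :=
      mul_nonneg (Real.rpow_nonneg hGp0 _) (Real.rpow_nonneg hDp0 _)
    calc 2 * (K * C) * (2 ^ (1/p) * (Gp ^ (1/p) * Dp ^ (1/p)))
        ≤ 2 * (K * C) * (2 * (Gp ^ (1/p) * Dp ^ (1/p))) := by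
          apply mul_le_mul_of_nonneg_left _ (by positivity)
          exact mul_le_mul_of_nonneg_right h2p hGD0
      _ = 4 * C * K * Gp ^ (1/p) * Dp ^ (1/p) := by ring
  calc (∫ x in Ioi (0:ℝ),
        |hjmDrift g t f₁ x - hjmDrift g t f₂ x| ^ p * Real.exp (ν * x)) ^ (1/p)
      ≤ ((2 * (K * C)) ^ p * ((Gp ^ (1/p)) ^ p * Dp + (Dp ^ (1/p)) ^ p * Gp)) ^ (1/p) :=
        Real.rpow_le_rpow hLHS0 hIntBound (by positivity)
    _ ≤ 4 * C * K * Gp ^ (1/p) * Dp ^ (1/p) := hfinal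
end

section
/- Let ν > 0, p ≥ 2 and 1/p + 1/q = 1. Suppose there are functions ḡ ∈ L^p_ν and ĝ ∈ L^p_ν ∩ L^∞([0,∞)) such that for all t, x ∈ [0,∞) and u, v ∈ ℝ: ‖g(t,x,u)‖_H ≤ |ḡ(x)| and ‖g(t,x,u) − g(t,x,v)‖_H ≤ |ĝ(x)| |u − v|. Then for every t ≥ 0, all measurable f₁, f₂ ∈ L^p_ν and every x ∈ [0,∞), |F(t,f₁)(x) − F(t,f₂)(x)| ≤ (p/(νq))^{1/q} ‖ĝ‖_{L^∞} ‖f₁ − f₂‖_{ν,p} |ḡ(x)| + (p/(νq))^{1/q} ‖ḡ‖_{ν,p} |ĝ(x)| |f₁(x) − f₂(x)|. -/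
open MeasureTheory Set Real

lemma memLp_of_integrable_rpow {α : Type*} [MeasurableSpace α] {μ : Measure α} {f : α → ℝ} {p : ℝ}
    (hp : 0 < p) (hm : AEStronglyMeasurable f μ)
    (hi : Integrable (fun x => ‖f x‖ ^ p) μ) : MemLp f (ENNReal.ofReal p) μ := by
  have h0 : (ENNReal.ofReal p) ≠ 0 := by simp [ENNReal.ofReal_eq_zero, not_le, hp]
  have htop : (ENNReal.ofReal p) ≠ ⊤ := ENNReal.ofReal_ne_top
  have hd : ENNReal.ofReal p / ENNReal.ofReal p = 1 := ENNReal.div_self h0 htop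
  refine (memLp_norm_rpow_iff hm h0 htop).mp ?_
  rw [hd]
  simpa [ENNReal.toReal_ofReal hp.le, memLp_one_iff_integrable] using hi

lemma int_abs_of_weighted (ν p : ℝ) (hν : 0 < ν) (hp1 : 1 ≤ p) (h : ℝ → ℝ) (hm : Measurable h)
    (hi : IntegrableOn (fun y => |h y| ^ p * Real.exp (ν * y)) (Ioi 0)) (x : ℝ) :
    IntegrableOn (fun y => |h y|) (Ioc 0 x) := by
  have hconst : IntegrableOn (fun _ : ℝ => (1 : ℝ)) (Ioc 0 x) :=
    integrableOn_const measure_Ioc_lt_top.ne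
  refine Integrable.mono' (hconst.add (hi.mono_set Ioc_subset_Ioi_self))
    hm.abs.aestronglyMeasurable ?_
  filter_upwards [ae_restrict_mem measurableSet_Ioc] with y hy
  rw [Real.norm_eq_abs, abs_abs]
  simp only [Pi.add_apply]
  have he : (1 : ℝ) ≤ Real.exp (ν * y) :=
    Real.one_le_exp (mul_nonneg hν.le hy.1.le)
  have hnn : (0:ℝ) ≤ |h y| ^ p := Real.rpow_nonneg (abs_nonneg _) p
  rcases le_or_gt (|h y|) 1 with h1 | h1
  · have : (0:ℝ) ≤ |h y| ^ p * Real.exp (ν * y) :=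
      mul_nonneg hnn (Real.exp_nonneg _)
    linarith
  · have h3 : |h y| ≤ |h y| ^ p := by
      nth_rewrite 1 [← Real.rpow_one (|h y|)]
      exact Real.rpow_le_rpow_of_exponent_le h1.le hp1
    have h4 : |h y| ^ p * 1 ≤ |h y| ^ p * Real.exp (ν * y) :=
      mul_le_mul_of_nonneg_left he hnn
    rw [mul_one] at h4
    linarith

lemma hoelder_weight (ν p q : ℝ) (hν : 0 < ν) (hcon : p.HolderConjugate q)
    (h : ℝ → ℝ) (hm : Measurable h)
    (hi : IntegrableOn (fun y => |h y| ^ p * Real.exp (ν * y)) (Ioi 0)) (x : ℝ) :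
    ∫ y in Ioc 0 x, |h y| ≤
      (p / (ν * q)) ^ (1 / q) * (∫ y in Ioi 0, |h y| ^ p * Real.exp (ν * y)) ^ (1 / p) := by
  have hp0 : 0 < p := hcon.pos
  have hq0 : 0 < q := hcon.symm.pos
  set b : ℝ := ν * q / p with hb_def
  have hb : 0 < b := div_pos (mul_pos hν hq0) hp0
  set F : ℝ → ℝ := fun y => |h y| * Real.exp (ν * y / p) with hF_def
  set G : ℝ → ℝ := fun y => Real.exp (-(ν / p) * y) with hG_def
  have hF0 : ∀ y, 0 ≤ F y := fun y => mul_nonneg (abs_nonneg _) (Real.exp_nonneg _)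
  have hG0 : ∀ y, 0 ≤ G y := fun y => Real.exp_nonneg _
  have hFp : ∀ y, F y ^ p = |h y| ^ p * Real.exp (ν * y) := by
    intro y
    rw [hF_def, Real.mul_rpow (abs_nonneg _) (Real.exp_nonneg _), ← Real.exp_mul]
    congr 2
    field_simp
  have hGq : ∀ y, G y ^ q = Real.exp (-b * y) := by
    intro y
    rw [hG_def, ← Real.exp_mul, hb_def]
    congr 1
    field_simp
  have hFG : ∀ y, F y * G y = |h y| := by
    intro y
    rw [hF_def, hG_def, mul_assoc, ← Real.exp_add]
    have he : ν * y / p + -(ν / p) * y = 0 := by ring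
    rw [he, Real.exp_zero, mul_one]
  have hiF : IntegrableOn (fun y => |h y| ^ p * Real.exp (ν * y)) (Ioc 0 x) :=
    hi.mono_set Ioc_subset_Ioi_self
  have hFmeas : Measurable F := by
    apply hm.abs.mul
    exact Real.measurable_exp.comp ((measurable_id.const_mul ν).div_const p)
  have hGmeas : Measurable G :=
    Real.measurable_exp.comp (measurable_id.const_mul _)
  have hFmem : MemLp F (ENNReal.ofReal p) (volume.restrict (Ioc 0 x)) := by
    refine memLp_of_integrable_rpow hp0 hFmeas.aestronglyMeasurable ?_
    have heq : (fun y => ‖F y‖ ^ p) = fun y => |h y| ^ p * Real.exp (ν * y) := by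
      funext y; rw [Real.norm_of_nonneg (hF0 y), hFp y]
    rw [heq]; exact hiF
  have hGmem : MemLp G (ENNReal.ofReal q) (volume.restrict (Ioc 0 x)) := by
    refine memLp_of_integrable_rpow hq0 hGmeas.aestronglyMeasurable ?_
    have heq : (fun y => ‖G y‖ ^ q) = fun y => Real.exp (-b * y) := by
      funext y; rw [Real.norm_of_nonneg (hG0 y), hGq y]
    rw [heq]
    exact (exp_neg_integrableOn_Ioi 0 hb).mono_set Ioc_subset_Ioi_self
  have key := integral_mul_le_Lp_mul_Lq_of_nonneg hcon (ae_of_all _ hF0) (ae_of_all _ hG0)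
    hFmem hGmem
  have hL : ∫ y in Ioc 0 x, F y * G y = ∫ y in Ioc 0 x, |h y| := by simp_rw [hFG]
  have hN0 : 0 ≤ ∫ y in Ioi (0:ℝ), |h y| ^ p * Real.exp (ν * y) :=
    setIntegral_nonneg measurableSet_Ioi fun y _ =>
      mul_nonneg (Real.rpow_nonneg (abs_nonneg _) _) (Real.exp_nonneg _)
  have h1 : ∫ y in Ioc 0 x, F y ^ p ≤ ∫ y in Ioi 0, |h y| ^ p * Real.exp (ν * y) := by
    simp_rw [hFp]
    exact setIntegral_mono_set hi
      (ae_of_all _ fun y => mul_nonneg (Real.rpow_nonneg (abs_nonneg _) _) (Real.exp_nonneg _))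
      (HasSubset.Subset.eventuallyLE Ioc_subset_Ioi_self)
  have hpq0 : (0:ℝ) < p / (ν * q) := div_pos hp0 (mul_pos hν hq0)
  have h2 : ∫ y in Ioc 0 x, G y ^ q ≤ p / (ν * q) := by
    simp_rw [hGq]
    have hInt : ∫ y in Ioi (0:ℝ), Real.exp (-b * y) = b⁻¹ := by
      have hc := integral_comp_mul_left_Ioi (fun u => Real.exp (-u)) 0 hb
      simp only [mul_zero, neg_zero, Real.exp_zero, smul_eq_mul, mul_one,
        integral_exp_neg_Ioi, neg_zero] at hc
      simpa [neg_mul] using hc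
    have hmono : ∫ y in Ioc 0 x, Real.exp (-b * y) ≤ ∫ y in Ioi 0, Real.exp (-b * y) :=
      setIntegral_mono_set (exp_neg_integrableOn_Ioi 0 hb)
      (ae_of_all _ fun y => Real.exp_nonneg _)
      (HasSubset.Subset.eventuallyLE Ioc_subset_Ioi_self)
    rw [hInt] at hmono
    have hbinv : b⁻¹ = p / (ν * q) := by rw [hb_def, inv_div]
    linarith
  have hq1 : (0:ℝ) ≤ 1 / q := by positivity
  have hp1 : (0:ℝ) ≤ 1 / p := by positivity
  calc ∫ y in Ioc 0 x, |h y| = ∫ y in Ioc 0 x, F y * G y := hL.symm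
    _ ≤ (∫ y in Ioc 0 x, F y ^ p) ^ (1/p) * (∫ y in Ioc 0 x, G y ^ q) ^ (1/q) := key
    _ ≤ (∫ y in Ioi 0, |h y| ^ p * Real.exp (ν * y)) ^ (1/p) * (p / (ν * q)) ^ (1/q) := by
        apply mul_le_mul
        · exact Real.rpow_le_rpow
            (integral_nonneg fun y => Real.rpow_nonneg (hF0 y) _) h1 hp1
        · exact Real.rpow_le_rpow
            (integral_nonneg fun y => Real.rpow_nonneg (hG0 y) _) h2 hq1
        · exact Real.rpow_nonneg
            (integral_nonneg fun y => Real.rpow_nonneg (hG0 y) _) _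
        · exact Real.rpow_nonneg hN0 _
    _ = (p / (ν * q)) ^ (1 / q) * (∫ y in Ioi 0, |h y| ^ p * Real.exp (ν * y)) ^ (1 / p) :=
        mul_comm _ _

/-- Under `‖g(t,x,u)‖_H ≤ |ḡ(x)|` and
`‖g(t,x,u) − g(t,x,v)‖_H ≤ |ĝ(x)| |u − v|` with `ḡ ∈ L^p_ν` and `ĝ ∈ L^p_ν ∩ L^∞`,
for every `t ≥ 0`, measurable `f₁, f₂ ∈ L^p_ν` and `x ≥ 0`,
`|F(t,f₁)(x) − F(t,f₂)(x)| ≤ (p/(νq))^{1/q} ‖ĝ‖_{L^∞} ‖f₁ − f₂‖_{ν,p} |ḡ(x)|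
 + (p/(νq))^{1/q} ‖ḡ‖_{ν,p} |ĝ(x)| |f₁(x) − f₂(x)|`. -/
theorem stmt_8 {H : Type*} [NormedAddCommGroup H] [InnerProductSpace ℝ H]
    [CompleteSpace H] [TopologicalSpace.SeparableSpace H]
    (ν p q : ℝ) (hν : 0 < ν) (hp : 2 ≤ p) (hpq : 1 / p + 1 / q = 1)
    (g : ℝ → ℝ → ℝ → H)
    (hgm : StronglyMeasurable fun z : ℝ × ℝ × ℝ => g z.1 z.2.1 z.2.2)
    (gbar ghat : ℝ → ℝ) (hgbarm : Measurable gbar) (hghatm : Measurable ghat)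
    (hgbar : IntegrableOn (fun x => |gbar x| ^ p * Real.exp (ν * x)) (Ioi 0))
    (hghat : IntegrableOn (fun x => |ghat x| ^ p * Real.exp (ν * x)) (Ioi 0))
    (hghatInf : eLpNormEssSup ghat (volume.restrict (Ioi 0)) ≠ ⊤)
    (hb : ∀ t x u : ℝ, 0 ≤ t → 0 ≤ x → ‖g t x u‖ ≤ |gbar x|)
    (hlip : ∀ t x u v : ℝ, 0 ≤ t → 0 ≤ x → ‖g t x u - g t x v‖ ≤ |ghat x| * |u - v|)
    (t : ℝ) (ht : 0 ≤ t) (f₁ f₂ : ℝ → ℝ) (hf₁m : Measurable f₁) (hf₂m : Measurable f₂)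
    (hf₁ : IntegrableOn (fun x => |f₁ x| ^ p * Real.exp (ν * x)) (Ioi 0))
    (hf₂ : IntegrableOn (fun x => |f₂ x| ^ p * Real.exp (ν * x)) (Ioi 0)) :
    ∀ x : ℝ, 0 ≤ x →
      |hjmDrift g t f₁ x - hjmDrift g t f₂ x| ≤
        (p / (ν * q)) ^ (1 / q) *
            (eLpNormEssSup ghat (volume.restrict (Ioi 0))).toReal *
            (∫ y in Ioi (0 : ℝ), |f₁ y - f₂ y| ^ p * Real.exp (ν * y)) ^ (1 / p) *
            |gbar x| +
          (p / (ν * q)) ^ (1 / q) *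
            (∫ y in Ioi (0 : ℝ), |gbar y| ^ p * Real.exp (ν * y)) ^ (1 / p) *
            |ghat x| * |f₁ x - f₂ x| := by
  intro x hx
  have hcon : p.HolderConjugate q := ⟨by
    rw [inv_one, ← one_div, ← one_div]; exact hpq, by linarith,
    one_div_pos.mp (by have := one_div_le_one_div_of_le (by norm_num : (0:ℝ) < 2) hp; linarith)⟩
  have hp0 : 0 < p := hcon.pos
  have hq0 : 0 < q := hcon.symm.pos
  have hp1 : (1:ℝ) ≤ p := by linarith
  -- the essential sup bound
  set E : ℝ := (eLpNormEssSup ghat (volume.restrict (Ioi 0))).toReal with hE_def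
  have hE0 : 0 ≤ E := ENNReal.toReal_nonneg
  have hEae : ∀ᵐ y ∂(volume.restrict (Ioc (0:ℝ) x)), |ghat y| ≤ E := by
    have h1 : ∀ᵐ y ∂(volume.restrict (Ioi (0:ℝ))), |ghat y| ≤ E := by
      filter_upwards [ae_le_eLpNormEssSup (f := ghat) (μ := volume.restrict (Ioi (0:ℝ)))]
        with y hy
      have h2 := ENNReal.toReal_mono hghatInf hy
      simpa [Real.norm_eq_abs] using h2
    exact ae_restrict_of_ae_restrict_of_subset Ioc_subset_Ioi_self h1
  -- integrability of the weighted difference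
  have hΔm : Measurable fun y => f₁ y - f₂ y := hf₁m.sub hf₂m
  have hΔi : IntegrableOn (fun y => |f₁ y - f₂ y| ^ p * Real.exp (ν * y)) (Ioi 0) := by
    refine Integrable.mono'
      (((hf₁.add hf₂).const_mul ((2:ℝ) ^ p)))
      (((Real.continuous_rpow_const hp0.le).measurable.comp hΔm.abs).mul
        (Real.measurable_exp.comp (measurable_id.const_mul ν))).aestronglyMeasurable
      (ae_of_all _ fun y => ?_)
    have hnn : (0:ℝ) ≤ |f₁ y - f₂ y| ^ p * Real.exp (ν * y) :=
      mul_nonneg (Real.rpow_nonneg (abs_nonneg _) _) (Real.exp_nonneg _)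
    rw [Real.norm_of_nonneg hnn]
    set M : ℝ := max |f₁ y| |f₂ y| with hM_def
    have hM0 : 0 ≤ M := le_trans (abs_nonneg _) (le_max_left _ _)
    have h1 : |f₁ y - f₂ y| ≤ 2 * M := by
      have := abs_sub (f₁ y) (f₂ y)
      have := le_max_left |f₁ y| |f₂ y|
      have := le_max_right |f₁ y| |f₂ y|
      calc |f₁ y - f₂ y| ≤ |f₁ y| + |f₂ y| := abs_sub _ _
        _ ≤ 2 * M := by
            have h2 := le_max_left |f₁ y| |f₂ y|
            have h3 := le_max_right |f₁ y| |f₂ y|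
            linarith
    have h2 : |f₁ y - f₂ y| ^ p ≤ (2:ℝ) ^ p * M ^ p := by
      calc |f₁ y - f₂ y| ^ p ≤ (2 * M) ^ p :=
            Real.rpow_le_rpow (abs_nonneg _) h1 hp0.le
        _ = (2:ℝ) ^ p * M ^ p := Real.mul_rpow (by norm_num) hM0
    have h3 : M ^ p ≤ |f₁ y| ^ p + |f₂ y| ^ p := by
      rcases max_cases |f₁ y| |f₂ y| with ⟨hM, _⟩ | ⟨hM, _⟩ <;> rw [hM_def, hM]
      · have := Real.rpow_nonneg (abs_nonneg (f₂ y)) p; linarith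
      · have := Real.rpow_nonneg (abs_nonneg (f₁ y)) p; linarith
    have h4 : |f₁ y - f₂ y| ^ p ≤ (2:ℝ) ^ p * (|f₁ y| ^ p + |f₂ y| ^ p) := by
      have h2p : (0:ℝ) ≤ (2:ℝ) ^ p := Real.rpow_nonneg (by norm_num) _
      calc |f₁ y - f₂ y| ^ p ≤ (2:ℝ) ^ p * M ^ p := h2
        _ ≤ (2:ℝ) ^ p * (|f₁ y| ^ p + |f₂ y| ^ p) := mul_le_mul_of_nonneg_left h3 h2p
    calc |f₁ y - f₂ y| ^ p * Real.exp (ν * y)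
        ≤ ((2:ℝ) ^ p * (|f₁ y| ^ p + |f₂ y| ^ p)) * Real.exp (ν * y) :=
          mul_le_mul_of_nonneg_right h4 (Real.exp_nonneg _)
      _ = (2:ℝ) ^ p * (|f₁ y| ^ p * Real.exp (ν * y) + |f₂ y| ^ p * Real.exp (ν * y)) := by
          ring
  set C : ℝ := (p / (ν * q)) ^ (1 / q) with hC_def
  have hC0 : 0 ≤ C := Real.rpow_nonneg (div_nonneg hp0.le (mul_pos hν hq0).le) _
  set Ng : ℝ := (∫ y in Ioi (0 : ℝ), |gbar y| ^ p * Real.exp (ν * y)) ^ (1 / p) with hNg_def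
  set NΔ : ℝ := (∫ y in Ioi (0 : ℝ), |f₁ y - f₂ y| ^ p * Real.exp (ν * y)) ^ (1 / p) with hNΔ_def
  have hGbarInt : IntegrableOn (fun y => |gbar y|) (Ioc 0 x) :=
    int_abs_of_weighted ν p hν hp1 gbar hgbarm hgbar x
  have hΔInt : IntegrableOn (fun y => |f₁ y - f₂ y|) (Ioc 0 x) :=
    int_abs_of_weighted ν p hν hp1 _ hΔm hΔi x
  have hkey_gbar : ∫ y in Ioc 0 x, |gbar y| ≤ C * Ng :=
    hoelder_weight ν p q hν hcon gbar hgbarm hgbar x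
  have hkey_Δ : ∫ y in Ioc 0 x, |f₁ y - f₂ y| ≤ C * NΔ :=
    hoelder_weight ν p q hν hcon _ hΔm hΔi x
  have hg₁sm : AEStronglyMeasurable (fun y => g t y (f₁ y)) (volume.restrict (Ioc 0 x)) :=
    (hgm.comp_measurable
      (measurable_const.prodMk (measurable_id.prodMk hf₁m))).aestronglyMeasurable
  have hg₂sm : AEStronglyMeasurable (fun y => g t y (f₂ y)) (volume.restrict (Ioc 0 x)) :=
    (hgm.comp_measurable
      (measurable_const.prodMk (measurable_id.prodMk hf₂m))).aestronglyMeasurable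
  have hg₁int : IntegrableOn (fun y => g t y (f₁ y)) (Ioc 0 x) := by
    refine Integrable.mono' hGbarInt hg₁sm ?_
    filter_upwards [ae_restrict_mem measurableSet_Ioc] with y hy
    exact hb t y _ ht hy.1.le
  have hg₂int : IntegrableOn (fun y => g t y (f₂ y)) (Ioc 0 x) := by
    refine Integrable.mono' hGbarInt hg₂sm ?_
    filter_upwards [ae_restrict_mem measurableSet_Ioc] with y hy
    exact hb t y _ ht hy.1.le
  set I₁ : H := ∫ y in Ioc (0:ℝ) x, g t y (f₁ y) with hI₁_def
  set I₂ : H := ∫ y in Ioc (0:ℝ) x, g t y (f₂ y) with hI₂_def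
  have hI₁ : ‖I₁‖ ≤ C * Ng := by
    calc ‖I₁‖ ≤ ∫ y in Ioc 0 x, ‖g t y (f₁ y)‖ := norm_integral_le_integral_norm _
      _ ≤ ∫ y in Ioc 0 x, |gbar y| := by
          refine integral_mono_ae hg₁int.norm hGbarInt ?_
          filter_upwards [ae_restrict_mem measurableSet_Ioc] with y hy
          exact hb t y _ ht hy.1.le
      _ ≤ C * Ng := hkey_gbar
  have hsub : I₁ - I₂ = ∫ y in Ioc (0:ℝ) x, (g t y (f₁ y) - g t y (f₂ y)) :=
    (integral_sub hg₁int hg₂int).symm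
  have hI₁₂ : ‖I₁ - I₂‖ ≤ E * (C * NΔ) := by
    rw [hsub]
    calc ‖∫ y in Ioc (0:ℝ) x, (g t y (f₁ y) - g t y (f₂ y))‖
        ≤ ∫ y in Ioc 0 x, ‖g t y (f₁ y) - g t y (f₂ y)‖ := norm_integral_le_integral_norm _
      _ ≤ ∫ y in Ioc 0 x, E * |f₁ y - f₂ y| := by
          refine integral_mono_ae ((hg₁int.sub hg₂int).norm) (hΔInt.const_mul E) ?_
          filter_upwards [ae_restrict_mem measurableSet_Ioc, hEae] with y hy hEy
          calc ‖g t y (f₁ y) - g t y (f₂ y)‖ ≤ |ghat y| * |f₁ y - f₂ y| :=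
                hlip t y _ _ ht hy.1.le
            _ ≤ E * |f₁ y - f₂ y| := mul_le_mul_of_nonneg_right hEy (abs_nonneg _)
      _ = E * ∫ y in Ioc 0 x, |f₁ y - f₂ y| := integral_const_mul E _
      _ ≤ E * (C * NΔ) := mul_le_mul_of_nonneg_left hkey_Δ hE0
  have ha12 : ‖g t x (f₁ x) - g t x (f₂ x)‖ ≤ |ghat x| * |f₁ x - f₂ x| := hlip t x _ _ ht hx
  have ha2 : ‖g t x (f₂ x)‖ ≤ |gbar x| := hb t x _ ht hx
  have hdecomp : hjmDrift g t f₁ x - hjmDrift g t f₂ x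
      = @inner ℝ H _ (g t x (f₁ x) - g t x (f₂ x)) I₁
        + @inner ℝ H _ (g t x (f₂ x)) (I₁ - I₂) := by
    simp only [hjmDrift, inner_sub_left, inner_sub_right, ← hI₁_def, ← hI₂_def]
    ring
  calc |hjmDrift g t f₁ x - hjmDrift g t f₂ x|
      ≤ |@inner ℝ H _ (g t x (f₁ x) - g t x (f₂ x)) I₁|
        + |@inner ℝ H _ (g t x (f₂ x)) (I₁ - I₂)| := by
        rw [hdecomp]; exact abs_add_le _ _
    _ ≤ ‖g t x (f₁ x) - g t x (f₂ x)‖ * ‖I₁‖ + ‖g t x (f₂ x)‖ * ‖I₁ - I₂‖ :=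
        add_le_add (abs_real_inner_le_norm _ _) (abs_real_inner_le_norm _ _)
    _ ≤ (|ghat x| * |f₁ x - f₂ x|) * (C * Ng) + |gbar x| * (E * (C * NΔ)) :=
        add_le_add
          (mul_le_mul ha12 hI₁ (norm_nonneg _) (mul_nonneg (abs_nonneg _) (abs_nonneg _)))
          (mul_le_mul ha2 hI₁₂ (norm_nonneg _) (abs_nonneg _))
    _ = C * E * NΔ * |gbar x| + C * Ng * |ghat x| * |f₁ x - f₂ x| := by ring
end

section
/- Let ν > 0, p ≥ 2 and 1/p + 1/q = 1. Let g : [0,∞) × ℝ → H be measurable (time-independent) and suppose there are ḡ ∈ L^p_ν and ĝ ∈ L^p_ν ∩ L^∞([0,∞)) with ‖g(x,u)‖_H ≤ |ḡ(x)| and ‖g(x,u) − g(x,v)‖_H ≤ |ĝ(x)| |u−v| for all x ∈ [0,∞) and u, v ∈ ℝ. Define F(f)(x) = ⟨ g(x,f(x)), ∫_0^x g(y,f(y)) dy ⟩_H. Then for all measurable f₁, f₂ ∈ L^p_ν, ∫_0^∞ (F(f₁)(x) − F(f₂)(x)) (f₁(x) − f₂(x)) |f₁(x) − f₂(x)|^{p−2}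 e^{νx} dx ≤ 2 (p/(νq))^{1/q} ‖ĝ‖_{L^∞} ‖ḡ‖_{ν,p} ‖f₁ − f₂‖^p_{ν,p}. Equivalently, the semi-inner product satisfies [F(f₁) − F(f₂), f₁ − f₂] ≤ 2 (p/(νq))^{1/q} ‖ĝ‖_{L^∞} ‖ḡ‖_{ν,p} ‖f₁ − f₂‖²_{ν,p}. -/
open MeasureTheory Set Real

/-- The `L^p_ν` norm `‖f‖_{ν,p} = (∫_0^∞ |f(x)|^p e^{νx} dx)^{1/p}`. -/
noncomputable def lpNu (ν p : ℝ) (f : ℝ → ℝ) : ℝ :=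
  (∫ x in Ioi (0 : ℝ), |f x| ^ p * Real.exp (ν * x)) ^ (1 / p)

/-- The time-independent HJMM drift:
`F(f)(x) = ⟨ g(x,f(x)), ∫_0^x g(y,f(y)) dy ⟩_H`. -/
noncomputable def hjmDrift₀ {H : Type*} [NormedAddCommGroup H] [InnerProductSpace ℝ H]
    (g : ℝ → ℝ → H) (f : ℝ → ℝ) (x : ℝ) : ℝ :=
  @inner ℝ H _ (g x (f x)) (∫ y in Ioc (0 : ℝ) x, g y (f y))


lemma holder_aux {α : Type*} [MeasurableSpace α] (μ : Measure α) {p q : ℝ}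
    (hpq : Real.HolderConjugate p q) {a b : α → ℝ}
    (ha : AEMeasurable a μ) (hb : AEMeasurable b μ)
    (ha0 : ∀ x, 0 ≤ a x) (hb0 : ∀ x, 0 ≤ b x)
    (hap : Integrable (fun x => a x ^ p) μ) (hbq : Integrable (fun x => b x ^ q) μ) :
    Integrable (fun x => a x * b x) μ ∧
      ∫ x, a x * b x ∂μ ≤ (∫ x, a x ^ p ∂μ) ^ (1/p) * (∫ x, b x ^ q ∂μ) ^ (1/q) := by
  have hIa : 0 ≤ ∫ x, a x ^ p ∂μ := integral_nonneg fun x => Real.rpow_nonneg (ha0 x) _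
  have hIb : 0 ≤ ∫ x, b x ^ q ∂μ := integral_nonneg fun x => Real.rpow_nonneg (hb0 x) _
  have ea : ∫⁻ x, (ENNReal.ofReal (a x)) ^ p ∂μ = ENNReal.ofReal (∫ x, a x ^ p ∂μ) := by
    rw [MeasureTheory.ofReal_integral_eq_lintegral_ofReal hap
      (Filter.Eventually.of_forall fun x => Real.rpow_nonneg (ha0 x) _)]
    exact lintegral_congr fun x => ENNReal.ofReal_rpow_of_nonneg (ha0 x) hpq.nonneg
  have eb : ∫⁻ x, (ENNReal.ofReal (b x)) ^ q ∂μ = ENNReal.ofReal (∫ x, b x ^ q ∂μ) := by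
    rw [MeasureTheory.ofReal_integral_eq_lintegral_ofReal hbq
      (Filter.Eventually.of_forall fun x => Real.rpow_nonneg (hb0 x) _)]
    exact lintegral_congr fun x => ENNReal.ofReal_rpow_of_nonneg (hb0 x) hpq.symm.nonneg
  have key := ENNReal.lintegral_mul_le_Lp_mul_Lq μ hpq
      (ENNReal.measurable_ofReal.comp_aemeasurable ha)
      (ENNReal.measurable_ofReal.comp_aemeasurable hb)
  simp only [Pi.mul_apply, Function.comp] at key
  rw [ea, eb] at key
  have key2 : ∫⁻ x, ENNReal.ofReal (a x * b x) ∂μ ≤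
      ENNReal.ofReal ((∫ x, a x ^ p ∂μ) ^ (1/p) * (∫ x, b x ^ q ∂μ) ^ (1/q)) := by
    rw [ENNReal.ofReal_mul (Real.rpow_nonneg hIa _),
      ← ENNReal.ofReal_rpow_of_nonneg hIa hpq.one_div_nonneg,
      ← ENNReal.ofReal_rpow_of_nonneg hIb hpq.symm.one_div_nonneg]
    refine le_trans (le_of_eq ?_) key
    exact lintegral_congr fun x => ENNReal.ofReal_mul (ha0 x)
  have hnn : 0 ≤ᵐ[μ] fun x => a x * b x :=
    Filter.Eventually.of_forall fun x => mul_nonneg (ha0 x) (hb0 x)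
  have hint : Integrable (fun x => a x * b x) μ := by
    refine ⟨(ha.mul hb).aestronglyMeasurable, ?_⟩
    rw [hasFiniteIntegral_iff_ofReal hnn]
    exact lt_of_le_of_lt key2 ENNReal.ofReal_lt_top
  refine ⟨hint, ?_⟩
  rw [integral_eq_lintegral_of_nonneg_ae hnn (ha.mul hb).aestronglyMeasurable]
  calc (∫⁻ x, ENNReal.ofReal (a x * b x) ∂μ).toReal
      ≤ (ENNReal.ofReal ((∫ x, a x ^ p ∂μ) ^ (1/p) * (∫ x, b x ^ q ∂μ) ^ (1/q))).toReal :=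
        ENNReal.toReal_mono ENNReal.ofReal_ne_top key2
    _ = _ := ENNReal.toReal_ofReal (mul_nonneg (Real.rpow_nonneg hIa _) (Real.rpow_nonneg hIb _))

lemma interval_holder (ν p q : ℝ) (hν : 0 < ν) (hpq : Real.HolderConjugate p q)
    (h : ℝ → ℝ) (hm : Measurable h)
    (hint : IntegrableOn (fun y => |h y| ^ p * Real.exp (ν * y)) (Ioi 0)) (x : ℝ) :
    IntegrableOn (fun y => |h y|) (Ioc 0 x) ∧
      ∫ y in Ioc (0:ℝ) x, |h y| ≤ (p / (ν * q)) ^ (1/q) * lpNu ν p h := by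
  have hp0 : 0 < p := hpq.pos
  have hq0 : 0 < q := hpq.symm.pos
  have hc : 0 < ν * q / p := by positivity
  set c := ν * q / p with hcdef
  set a : ℝ → ℝ := fun y => |h y| * Real.exp (ν * y / p) with hadef
  set b : ℝ → ℝ := fun y => Real.exp (-(ν * y / p)) with hbdef
  have hexp : ∀ t : ℝ, Real.exp t ^ p = Real.exp (t * p) := fun t => (Real.exp_mul t p).symm
  have hexpq : ∀ t : ℝ, Real.exp t ^ q = Real.exp (t * q) := fun t => (Real.exp_mul t q).symm
  have hab : ∀ y, a y * b y = |h y| := by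
    intro y
    simp only [hadef, hbdef, mul_assoc, ← Real.exp_add]
    rw [add_neg_cancel, Real.exp_zero, mul_one]
  have hap : (fun y => a y ^ p) = fun y => |h y| ^ p * Real.exp (ν * y) := by
    funext y
    rw [hadef, Real.mul_rpow (abs_nonneg _) (Real.exp_nonneg _), hexp]
    rw [div_mul_cancel₀ _ (ne_of_gt hp0)]
  have hbq : (fun y => b y ^ q) = fun y => Real.exp (-(c * y)) := by
    funext y
    rw [hbdef, hexpq]
    congr 1
    rw [hcdef]
    ring
  have ham : AEMeasurable a (volume.restrict (Ioc (0:ℝ) x)) :=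
    (hm.abs.mul ((measurable_id.const_mul ν).div_const p).exp).aemeasurable
  have hbm : AEMeasurable b (volume.restrict (Ioc (0:ℝ) x)) :=
    (((measurable_id.const_mul ν).div_const p).neg.exp).aemeasurable
  have hapint : Integrable (fun y => a y ^ p) (volume.restrict (Ioc (0:ℝ) x)) := by
    rw [hap]; exact hint.mono_set Ioc_subset_Ioi_self
  have hbqint : Integrable (fun y => b y ^ q) (volume.restrict (Ioc (0:ℝ) x)) := by
    rw [hbq]
    exact (Real.continuous_exp.comp (continuous_const.mul continuous_id).neg).integrableOn_Ioc
  obtain ⟨hint1, hle⟩ := holder_aux (volume.restrict (Ioc (0:ℝ) x)) hpq ham hbm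
    (fun y => mul_nonneg (abs_nonneg _) (Real.exp_nonneg _)) (fun y => Real.exp_nonneg _)
    hapint hbqint
  simp only [hab] at hint1 hle
  refine ⟨hint1, le_trans hle ?_⟩
  rw [hap, hbq] at hle ⊢
  rw [mul_comm ((p / (ν * q)) ^ (1/q))]
  have hIa0 : 0 ≤ ∫ y in Ioc (0:ℝ) x, |h y| ^ p * Real.exp (ν * y) :=
    integral_nonneg fun y => mul_nonneg (Real.rpow_nonneg (abs_nonneg _) _) (Real.exp_nonneg _)
  have h1 : (∫ y in Ioc (0:ℝ) x, |h y| ^ p * Real.exp (ν * y)) ^ (1/p) ≤ lpNu ν p h := by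
    refine Real.rpow_le_rpow hIa0 ?_ (by positivity)
    refine setIntegral_mono_set hint ?_ (HasSubset.Subset.eventuallyLE Ioc_subset_Ioi_self)
    exact Filter.Eventually.of_forall fun y =>
      mul_nonneg (Real.rpow_nonneg (abs_nonneg _) _) (Real.exp_nonneg _)
  have hexpint : IntegrableOn (fun y : ℝ => Real.exp (-(c * y))) (Ioi (0:ℝ)) := by
    have := exp_neg_integrableOn_Ioi 0 hc
    simpa [neg_mul] using this
  have h2 : (∫ y in Ioc (0:ℝ) x, Real.exp (-(c * y))) ^ (1/q) ≤ (p / (ν * q)) ^ (1/q) := by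
    refine Real.rpow_le_rpow (integral_nonneg fun y => Real.exp_nonneg _) ?_ (by positivity)
    have hmono : ∫ y in Ioc (0:ℝ) x, Real.exp (-(c * y)) ≤ ∫ y in Ioi (0:ℝ), Real.exp (-(c * y)) :=
      setIntegral_mono_set hexpint (Filter.Eventually.of_forall fun y => Real.exp_nonneg _)
        (HasSubset.Subset.eventuallyLE Ioc_subset_Ioi_self)
    refine le_trans hmono (le_of_eq ?_)
    have := integral_comp_mul_left_Ioi (fun t : ℝ => Real.exp (-t)) 0 hc
    simp only [mul_zero, smul_eq_mul] at this
    rw [this, integral_exp_neg_Ioi_zero, mul_one, hcdef]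
    rw [inv_div]
  have hlp0 : 0 ≤ lpNu ν p h := Real.rpow_nonneg (integral_nonneg fun y =>
    mul_nonneg (Real.rpow_nonneg (abs_nonneg _) _) (Real.exp_nonneg _)) _
  exact mul_le_mul h1 h2 (Real.rpow_nonneg (integral_nonneg fun y => Real.exp_nonneg _) _) hlp0

/-- For time-independent `g` with `‖g(x,u)‖_H ≤ |ḡ(x)|` and
`‖g(x,u) − g(x,v)‖_H ≤ |ĝ(x)| |u−v|` (`ḡ ∈ L^p_ν`, `ĝ ∈ L^p_ν ∩ L^∞`), the semi-inner
product estimate holds for all measurable `f₁, f₂ ∈ L^p_ν`: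
`∫_0^∞ (F(f₁)(x) − F(f₂)(x))(f₁(x) − f₂(x))|f₁(x) − f₂(x)|^{p−2} e^{νx} dx
  ≤ 2 (p/(νq))^{1/q} ‖ĝ‖_{L^∞} ‖ḡ‖_{ν,p} ‖f₁ − f₂‖^p_{ν,p}`. -/
theorem stmt_15 {H : Type*} [NormedAddCommGroup H] [InnerProductSpace ℝ H]
    [CompleteSpace H] [TopologicalSpace.SeparableSpace H]
    (ν p q : ℝ) (hν : 0 < ν) (hp : 2 ≤ p) (hpq : 1 / p + 1 / q = 1)
    (g : ℝ → ℝ → H)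
    (hgm : StronglyMeasurable fun z : ℝ × ℝ => g z.1 z.2)
    (gbar ghat : ℝ → ℝ) (hgbarm : Measurable gbar) (hghatm : Measurable ghat)
    (hgbar : IntegrableOn (fun x => |gbar x| ^ p * Real.exp (ν * x)) (Ioi 0))
    (hghat : IntegrableOn (fun x => |ghat x| ^ p * Real.exp (ν * x)) (Ioi 0))
    (hghatInf : eLpNormEssSup ghat (volume.restrict (Ioi 0)) ≠ ⊤)
    (hb : ∀ x u : ℝ, 0 ≤ x → ‖g x u‖ ≤ |gbar x|)
    (hlip : ∀ x u v : ℝ, 0 ≤ x → ‖g x u - g x v‖ ≤ |ghat x| * |u - v|)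
    (f₁ f₂ : ℝ → ℝ) (hf₁m : Measurable f₁) (hf₂m : Measurable f₂)
    (hf₁ : IntegrableOn (fun x => |f₁ x| ^ p * Real.exp (ν * x)) (Ioi 0))
    (hf₂ : IntegrableOn (fun x => |f₂ x| ^ p * Real.exp (ν * x)) (Ioi 0)) :
    (∫ x in Ioi (0 : ℝ),
        (hjmDrift₀ g f₁ x - hjmDrift₀ g f₂ x) * (f₁ x - f₂ x) *
          |f₁ x - f₂ x| ^ (p - 2) * Real.exp (ν * x)) ≤
      2 * (p / (ν * q)) ^ (1 / q) *
        (eLpNormEssSup ghat (volume.restrict (Ioi 0))).toReal *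
        lpNu ν p gbar * lpNu ν p (fun x => f₁ x - f₂ x) ^ p := by
  have hp1 : 1 < p := by linarith
  have hp0 : 0 < p := by linarith
  have hq0 : 0 < q := by
    have h2 : 1 / p < 1 := by rw [div_lt_one hp0]; exact hp1
    have h1 : (0:ℝ) < 1 / q := by linarith
    exact one_div_pos.mp h1
  have hpq' : Real.HolderConjugate p q := Real.holderConjugate_iff.mpr ⟨hp1, by rw [← one_div, ← one_div]; exact hpq⟩
  set C : ℝ := (p / (ν * q)) ^ (1 / q) with hCdef
  set M : ℝ := (eLpNormEssSup ghat (volume.restrict (Ioi 0))).toReal with hMdef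
  set Ng : ℝ := lpNu ν p gbar with hNgdef
  set Nδ : ℝ := lpNu ν p (fun x => f₁ x - f₂ x) with hNδdef
  have hC0 : 0 ≤ C := Real.rpow_nonneg (by positivity) _
  have hM0 : 0 ≤ M := ENNReal.toReal_nonneg
  have hNg0 : 0 ≤ Ng :=
    Real.rpow_nonneg (integral_nonneg fun x => by positivity) _
  have hNδ0 : 0 ≤ Nδ :=
    Real.rpow_nonneg (integral_nonneg fun x => by positivity) _
  -- power helpers
  have habsmul : ∀ (t r : ℝ), 0 ≤ r → |t| * |t| ^ r = |t| ^ (r + 1) := by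
    intro t r hr
    rcases eq_or_ne t 0 with rfl | ht
    · simp [Real.zero_rpow (show r + (1:ℝ) ≠ 0 by linarith)]
    · rw [Real.rpow_add (abs_pos.mpr ht) r 1, Real.rpow_one, mul_comm]
  have hmulself : Nδ * Nδ ^ (p - 1) = Nδ ^ p := by
    rcases eq_or_lt_of_le hNδ0 with h | h
    · rw [← h, Real.zero_rpow (by linarith : p - 1 ≠ 0), Real.zero_rpow hp0.ne', mul_zero]
    · calc Nδ * Nδ ^ (p-1) = Nδ ^ (1:ℝ) * Nδ ^ (p-1) := by rw [Real.rpow_one]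
        _ = Nδ ^ (1 + (p-1)) := (Real.rpow_add h 1 (p-1)).symm
        _ = Nδ ^ p := by ring_nf
  -- integrability of |δ|^p e^{νx}
  have hδp : IntegrableOn (fun x => |f₁ x - f₂ x| ^ p * Real.exp (ν * x)) (Ioi 0) := by
    refine Integrable.mono' ((hf₁.add hf₂).const_mul ((2:ℝ) ^ p)) ?_ ?_
    · exact (((hf₁m.sub hf₂m).abs.pow_const p).mul
        ((measurable_id.const_mul ν).exp)).aestronglyMeasurable
    · refine Filter.Eventually.of_forall fun x => ?_
      have hmax0 : 0 ≤ max |f₁ x| |f₂ x| := le_trans (abs_nonneg _) (le_max_left _ _)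
      have h1 : |f₁ x - f₂ x| ^ p ≤ (2 * max |f₁ x| |f₂ x|) ^ p := by
        refine Real.rpow_le_rpow (abs_nonneg _) ?_ hp0.le
        have h1a := abs_sub (f₁ x) (f₂ x)
        have h1b := le_max_left |f₁ x| |f₂ x|
        have h1c := le_max_right |f₁ x| |f₂ x|
        linarith
      have h2 : (2 * max |f₁ x| |f₂ x|) ^ p = 2 ^ p * max |f₁ x| |f₂ x| ^ p :=
        Real.mul_rpow (by norm_num) hmax0
      have h3 : max |f₁ x| |f₂ x| ^ p ≤ |f₁ x| ^ p + |f₂ x| ^ p := by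
        rcases max_cases |f₁ x| |f₂ x| with ⟨hm, _⟩ | ⟨hm, _⟩ <;> rw [hm]
        · exact le_add_of_nonneg_right (Real.rpow_nonneg (abs_nonneg _) _)
        · exact le_add_of_nonneg_left (Real.rpow_nonneg (abs_nonneg _) _)
      rw [Real.norm_eq_abs, abs_of_nonneg (by positivity)]
      calc |f₁ x - f₂ x| ^ p * Real.exp (ν * x)
          ≤ (2 ^ p * (|f₁ x| ^ p + |f₂ x| ^ p)) * Real.exp (ν * x) := by
            refine mul_le_mul_of_nonneg_right ?_ (Real.exp_nonneg _)
            refine le_trans h1 ?_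
            rw [h2]
            exact mul_le_mul_of_nonneg_left h3 (by positivity)
        _ = 2 ^ p * (|f₁ x| ^ p * Real.exp (ν * x) + |f₂ x| ^ p * Real.exp (ν * x)) := by ring
  -- Nδ ^ p as an integral
  have hNδp : Nδ ^ p = ∫ x in Ioi (0:ℝ), |f₁ x - f₂ x| ^ p * Real.exp (ν * x) := by
    have hI0 : 0 ≤ ∫ x in Ioi (0:ℝ), |f₁ x - f₂ x| ^ p * Real.exp (ν * x) :=
      integral_nonneg fun x => by positivity
    rw [hNδdef]
    simp only [lpNu]
    rw [← Real.rpow_mul hI0, one_div_mul_cancel hp0.ne', Real.rpow_one]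
  -- essential sup bound
  have hMae : ∀ᵐ x ∂(volume.restrict (Ioi (0:ℝ))), |ghat x| ≤ M := by
    filter_upwards [ae_le_eLpNormEssSup (f := ghat) (μ := volume.restrict (Ioi (0:ℝ)))]
      with x hx
    have h2 := ENNReal.toReal_mono hghatInf hx
    simpa using h2
  -- interval facts
  have hgbarI := fun x => interval_holder ν p q hν hpq' gbar hgbarm hgbar x
  have hδI := fun x => interval_holder ν p q hν hpq' (fun t => f₁ t - f₂ t)
    (hf₁m.sub hf₂m) hδp x
  have hGm : ∀ (f : ℝ → ℝ), Measurable f → ∀ x : ℝ,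
      AEStronglyMeasurable (fun y => g y (f y)) (volume.restrict (Ioc (0:ℝ) x)) := fun f hf x =>
    (hgm.comp_measurable (measurable_id.prodMk hf)).aestronglyMeasurable
  have hGint : ∀ (f : ℝ → ℝ), Measurable f → ∀ x : ℝ,
      IntegrableOn (fun y => g y (f y)) (Ioc 0 x) := by
    intro f hf x
    refine Integrable.mono' (hgbarI x).1 (hGm f hf x) ?_
    filter_upwards [ae_restrict_mem measurableSet_Ioc] with y hy
    exact hb y (f y) (le_of_lt hy.1)
  have hGnorm : ∀ (f : ℝ → ℝ), Measurable f → ∀ x : ℝ,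
      ‖∫ y in Ioc (0:ℝ) x, g y (f y)‖ ≤ C * Ng := by
    intro f hf x
    refine le_trans (norm_integral_le_integral_norm _) ?_
    refine le_trans (integral_mono_ae ((hGint f hf x).norm) (hgbarI x).1 ?_) (hgbarI x).2
    filter_upwards [ae_restrict_mem measurableSet_Ioc] with y hy
    exact hb y (f y) (le_of_lt hy.1)
  have hGdiff : ∀ x : ℝ,
      ‖(∫ y in Ioc (0:ℝ) x, g y (f₁ y)) - ∫ y in Ioc (0:ℝ) x, g y (f₂ y)‖ ≤ M * (C * Nδ) := by
    intro x
    rw [← integral_sub (hGint f₁ hf₁m x) (hGint f₂ hf₂m x)]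
    refine le_trans (norm_integral_le_integral_norm _) ?_
    have hMae' : ∀ᵐ y ∂(volume.restrict (Ioc (0:ℝ) x)), |ghat y| ≤ M :=
      ae_mono (Measure.restrict_mono Ioc_subset_Ioi_self le_rfl) hMae
    have hint2 : Integrable (fun y => M * |f₁ y - f₂ y|) (volume.restrict (Ioc (0:ℝ) x)) :=
      (hδI x).1.const_mul M
    have hb2 : ∀ᵐ y ∂(volume.restrict (Ioc (0:ℝ) x)),
        ‖g y (f₁ y) - g y (f₂ y)‖ ≤ M * |f₁ y - f₂ y| := by
      filter_upwards [ae_restrict_mem measurableSet_Ioc, hMae'] with y hy hMy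
      refine le_trans (hlip y (f₁ y) (f₂ y) (le_of_lt hy.1)) ?_
      exact mul_le_mul_of_nonneg_right hMy (abs_nonneg _)
    have hint1 : Integrable (fun y => ‖g y (f₁ y) - g y (f₂ y)‖)
        (volume.restrict (Ioc (0:ℝ) x)) := by
      refine Integrable.mono' hint2
        (((hGint f₁ hf₁m x).sub (hGint f₂ hf₂m x)).aestronglyMeasurable.norm) ?_
      filter_upwards [hb2] with y hy
      simpa using hy
    refine le_trans (integral_mono_ae hint1 hint2 hb2) ?_
    rw [MeasureTheory.integral_const_mul]
    exact mul_le_mul_of_nonneg_left (hδI x).2 hM0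
  -- the Hölder estimate for the second bound term
  set a : ℝ → ℝ := fun x => |gbar x| * Real.exp (ν * x / p) with hadef
  set b : ℝ → ℝ := fun x => |f₁ x - f₂ x| ^ (p - 1) * Real.exp (ν * x / q) with hbdef
  have hpq2 : q + p = p * q := by
    have h := hpq
    field_simp at h
    linarith
  have hsum : ∀ x : ℝ, ν * x / p + ν * x / q = ν * x := by
    intro x
    rw [div_add_div _ _ hp0.ne' hq0.ne',
      show ν * x * q + p * (ν * x) = ν * x * (p * q) by rw [← hpq2]; ring,
      mul_div_assoc, div_self (by positivity), mul_one]
  have habfun : (fun x => a x * b x) =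
      fun x => |gbar x| * |f₁ x - f₂ x| ^ (p - 1) * Real.exp (ν * x) := by
    funext x
    simp only [hadef, hbdef]
    rw [mul_mul_mul_comm, ← Real.exp_add, hsum x]
  have hapfun : (fun x => a x ^ p) = fun x => |gbar x| ^ p * Real.exp (ν * x) := by
    funext x
    simp only [hadef]
    rw [Real.mul_rpow (abs_nonneg _) (Real.exp_nonneg _), ← Real.exp_mul,
      div_mul_cancel₀ _ hp0.ne']
  have hbqfun : (fun x => b x ^ q) = fun x => |f₁ x - f₂ x| ^ p * Real.exp (ν * x) := by
    funext x
    simp only [hbdef]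
    rw [Real.mul_rpow (Real.rpow_nonneg (abs_nonneg _) _) (Real.exp_nonneg _),
      ← Real.rpow_mul (abs_nonneg _), hpq'.sub_one_mul_conj, ← Real.exp_mul,
      div_mul_cancel₀ _ hq0.ne']
  obtain ⟨hI2int, hI2le⟩ := holder_aux (volume.restrict (Ioi (0:ℝ))) hpq'
    (a := a) (b := b)
    ((hgbarm.abs.mul ((measurable_id.const_mul ν).div_const p).exp).aemeasurable)
    ((((hf₁m.sub hf₂m).abs.pow_const (p-1)).mul
      ((measurable_id.const_mul ν).div_const q).exp).aemeasurable)
    (fun x => mul_nonneg (abs_nonneg _) (Real.exp_nonneg _))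
    (fun x => mul_nonneg (Real.rpow_nonneg (abs_nonneg _) _) (Real.exp_nonneg _))
    (by rw [hapfun]; exact hgbar) (by rw [hbqfun]; exact hδp)
  rw [habfun] at hI2int hI2le
  rw [hapfun, hbqfun] at hI2le
  have hI2le' : (∫ x in Ioi (0:ℝ), |gbar x| * |f₁ x - f₂ x| ^ (p - 1) * Real.exp (ν * x))
      ≤ Ng * Nδ ^ (p - 1) := by
    refine le_trans hI2le (le_of_eq ?_)
    rw [← hNδp]
    congr 1
    rw [← Real.rpow_mul hNδ0, mul_one_div, hpq'.div_conj_eq_sub_one]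
  -- pointwise bound
  have hptw : ∀ᵐ x ∂(volume.restrict (Ioi (0:ℝ))),
      (hjmDrift₀ g f₁ x - hjmDrift₀ g f₂ x) * (f₁ x - f₂ x) *
          |f₁ x - f₂ x| ^ (p - 2) * Real.exp (ν * x) ≤
        M * (C * Ng) * (|f₁ x - f₂ x| ^ p * Real.exp (ν * x)) +
          M * (C * Nδ) * (|gbar x| * |f₁ x - f₂ x| ^ (p - 1) * Real.exp (ν * x)) := by
    filter_upwards [ae_restrict_mem measurableSet_Ioi, hMae] with x hx hMx
    have hx0 : (0:ℝ) ≤ x := le_of_lt hx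
    have hsplit : hjmDrift₀ g f₁ x - hjmDrift₀ g f₂ x =
        (inner ℝ (g x (f₁ x) - g x (f₂ x)) (∫ y in Ioc (0:ℝ) x, g y (f₁ y)) : ℝ) +
          inner ℝ (g x (f₂ x))
            ((∫ y in Ioc (0:ℝ) x, g y (f₁ y)) - ∫ y in Ioc (0:ℝ) x, g y (f₂ y)) := by
      simp only [hjmDrift₀, inner_sub_left, inner_sub_right]
      ring
    have habs : |hjmDrift₀ g f₁ x - hjmDrift₀ g f₂ x| ≤
        M * |f₁ x - f₂ x| * (C * Ng) + |gbar x| * (M * (C * Nδ)) := by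
      rw [hsplit]
      refine le_trans (abs_add_le _ _) (add_le_add ?_ ?_)
      · refine le_trans (abs_real_inner_le_norm _ _) ?_
        refine mul_le_mul ?_ (hGnorm f₁ hf₁m x) (norm_nonneg _)
          (mul_nonneg hM0 (abs_nonneg _))
        refine le_trans (hlip x (f₁ x) (f₂ x) hx0) ?_
        exact mul_le_mul_of_nonneg_right hMx (abs_nonneg _)
      · refine le_trans (abs_real_inner_le_norm _ _) ?_
        exact mul_le_mul (hb x (f₂ x) hx0) (hGdiff x) (norm_nonneg _) (abs_nonneg _)
    have e1 : |f₁ x - f₂ x| * |f₁ x - f₂ x| ^ (p - 1) = |f₁ x - f₂ x| ^ p := by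
      have h := habsmul (f₁ x - f₂ x) (p-1) (by linarith)
      rwa [show p - 1 + 1 = p by ring] at h
    have e2 : |f₁ x - f₂ x| * |f₁ x - f₂ x| ^ (p - 2) = |f₁ x - f₂ x| ^ (p - 1) := by
      have h := habsmul (f₁ x - f₂ x) (p-2) (by linarith)
      rwa [show p - 2 + 1 = p - 1 by ring] at h
    calc (hjmDrift₀ g f₁ x - hjmDrift₀ g f₂ x) * (f₁ x - f₂ x) *
          |f₁ x - f₂ x| ^ (p - 2) * Real.exp (ν * x)
        ≤ |hjmDrift₀ g f₁ x - hjmDrift₀ g f₂ x| * |f₁ x - f₂ x| ^ (p - 1) *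
            Real.exp (ν * x) := by
          refine mul_le_mul_of_nonneg_right ?_ (Real.exp_nonneg _)
          calc (hjmDrift₀ g f₁ x - hjmDrift₀ g f₂ x) * (f₁ x - f₂ x) * |f₁ x - f₂ x| ^ (p - 2)
              ≤ |(hjmDrift₀ g f₁ x - hjmDrift₀ g f₂ x) * (f₁ x - f₂ x) *
                  |f₁ x - f₂ x| ^ (p - 2)| := le_abs_self _
            _ = |hjmDrift₀ g f₁ x - hjmDrift₀ g f₂ x| * |f₁ x - f₂ x| *
                  |f₁ x - f₂ x| ^ (p - 2) := by
                rw [abs_mul, abs_mul, abs_of_nonneg (Real.rpow_nonneg (abs_nonneg _) _)]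
            _ = |hjmDrift₀ g f₁ x - hjmDrift₀ g f₂ x| * |f₁ x - f₂ x| ^ (p - 1) := by
                rw [mul_assoc, e2]
      _ ≤ (M * |f₁ x - f₂ x| * (C * Ng) + |gbar x| * (M * (C * Nδ))) *
            |f₁ x - f₂ x| ^ (p - 1) * Real.exp (ν * x) := by
          refine mul_le_mul_of_nonneg_right (mul_le_mul_of_nonneg_right habs
            (Real.rpow_nonneg (abs_nonneg _) _)) (Real.exp_nonneg _)
      _ = M * (C * Ng) * ((|f₁ x - f₂ x| * |f₁ x - f₂ x| ^ (p - 1)) * Real.exp (ν * x)) +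
            M * (C * Nδ) * (|gbar x| * |f₁ x - f₂ x| ^ (p - 1) * Real.exp (ν * x)) := by
          ring
      _ = M * (C * Ng) * (|f₁ x - f₂ x| ^ p * Real.exp (ν * x)) +
            M * (C * Nδ) * (|gbar x| * |f₁ x - f₂ x| ^ (p - 1) * Real.exp (ν * x)) := by
          rw [e1]
  -- conclusion
  by_cases hΦ : Integrable (fun x => (hjmDrift₀ g f₁ x - hjmDrift₀ g f₂ x) * (f₁ x - f₂ x) *
      |f₁ x - f₂ x| ^ (p - 2) * Real.exp (ν * x)) (volume.restrict (Ioi (0:ℝ)))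
  · have hB1 : Integrable (fun x => M * (C * Ng) * (|f₁ x - f₂ x| ^ p * Real.exp (ν * x)))
        (volume.restrict (Ioi (0:ℝ))) := hδp.const_mul _
    have hB2 : Integrable
        (fun x => M * (C * Nδ) * (|gbar x| * |f₁ x - f₂ x| ^ (p - 1) * Real.exp (ν * x)))
        (volume.restrict (Ioi (0:ℝ))) := hI2int.const_mul _
    refine le_trans (integral_mono_ae hΦ (hB1.add hB2) hptw) ?_
    simp only [Pi.add_apply]
    rw [integral_add hB1 hB2, MeasureTheory.integral_const_mul, MeasureTheory.integral_const_mul]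
    calc M * (C * Ng) * (∫ x in Ioi (0:ℝ), |f₁ x - f₂ x| ^ p * Real.exp (ν * x)) +
          M * (C * Nδ) *
            (∫ x in Ioi (0:ℝ), |gbar x| * |f₁ x - f₂ x| ^ (p - 1) * Real.exp (ν * x))
        ≤ M * (C * Ng) * Nδ ^ p + M * (C * Nδ) * (Ng * Nδ ^ (p - 1)) := by
          refine add_le_add (le_of_eq ?_) ?_
          · rw [hNδp]
          · exact mul_le_mul_of_nonneg_left hI2le'
              (mul_nonneg hM0 (mul_nonneg hC0 hNδ0))
      _ = 2 * C * M * Ng * Nδ ^ p := by rw [← hmulself]; ring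
  · rw [integral_undef hΦ]
    have : 0 ≤ Nδ ^ p := Real.rpow_nonneg hNδ0 _
    have h2 : (0:ℝ) ≤ 2 * C * M * Ng := by positivity
    calc (0:ℝ) ≤ (2 * C * M * Ng) * Nδ ^ p := mul_nonneg h2 this
      _ = 2 * C * M * Ng * Nδ ^ p := by ring
end
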